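/- arXiv:2602.00177 — 6 statements merged into one kernel-verified Lean document; each statement's English description precedes it below -/
import Mathlib

section
/- Let Ω ⊆ ℂⁿ be an open set, let f : Ω → ℂ be holomorphic on Ω, and let z₀ ∈ Ω be a point such that ∂f/∂z_j(z₀) ≠ 0 for every j = 1,…,n. Then there exists an open convex neighborhood N ⊆ Ω of z₀ such that for all z, w ∈ N with z ≠ w and such that (∂f/∂z_j(z₀))·(w_j − z_j) is a nonnegative real number for every j = 1,…,n, one has |f(w) − f(z)| > (1/2)·Σ_{j=1}^n |∂f/∂z_j(z₀)|·|w_j − z_j| > 0. (This is the quantitative separation estimate established in the proof of Proposition 1.1.) -/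
open Complex Finset

noncomputable def pder {n : ℕ} (f : (Fin n → ℂ) → ℂ) (z : Fin n → ℂ) (j : Fin n) : ℂ :=
  fderiv ℂ f z (Pi.single j 1)

noncomputable def pder2 {n : ℕ} (f : (Fin n → ℂ) → ℂ) (z : Fin n → ℂ) (j k : Fin n) : ℂ :=
  fderiv ℂ (fun w => pder f w k) z (Pi.single j 1)

def polydisk (n : ℕ) : Set (Fin n → ℂ) := {z | ∀ j, ‖z j‖ < 1}

/-- The class `𝓑_n(M)` of normalized holomorphic functions on the unit polydisk. -/
def memB (n : ℕ) (M : ℝ) (f : (Fin n → ℂ) → ℂ) : Prop :=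
  (∀ z ∈ polydisk n, DifferentiableAt ℂ f z) ∧ f 0 = 0 ∧
    (∀ j : Fin n, pder f 0 j = 1) ∧
    ∀ z ∈ polydisk n, ∑ l, ∑ j, ∑ k, ‖z l * pder2 f z j k‖ ≤ M

/-- The class `𝓑_{H_n^0}(M)` of normalized pluriharmonic mappings `f = h + conj ∘ g`. -/
def memBH (n : ℕ) (M : ℝ) (h g : (Fin n → ℂ) → ℂ) : Prop :=
  (∀ z ∈ polydisk n, DifferentiableAt ℂ h z) ∧ (∀ z ∈ polydisk n, DifferentiableAt ℂ g z) ∧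
    h 0 = 0 ∧ g 0 = 0 ∧ (∀ j : Fin n, pder h 0 j = 1) ∧ (∀ j : Fin n, pder g 0 j = 0) ∧
    ∀ z ∈ polydisk n, ∑ l, ∑ j, ∑ k,
      (‖z l * pder2 h z j k‖ + ‖z l * pder2 g z j k‖) ≤ M

section Aux
open Metric

lemma sliceDeriv {n : ℕ} {f : (Fin n → ℂ) → ℂ} {x v : Fin n → ℂ} {t : ℂ}
    (hf : DifferentiableAt ℂ f (x + t • v)) :
    HasDerivAt (fun s : ℂ => f (x + s • v)) (fderiv ℂ f (x + t • v) v) t := by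
  have h1 : HasDerivAt (fun s : ℂ => x + s • v) v t := by
    simpa using ((hasDerivAt_id t).smul_const v).const_add x
  exact hf.hasFDerivAt.comp_hasDerivAt t h1

lemma clm_apply_eq_sum {n : ℕ} (L : (Fin n → ℂ) →L[ℂ] ℂ) (v : Fin n → ℂ) :
    L v = ∑ j, v j • L (Pi.single j 1) := by
  have hv : v = ∑ j, v j • (Pi.single j (1:ℂ) : Fin n → ℂ) := by
    funext k
    simp [Pi.single_apply, Finset.sum_apply]
  conv_lhs => rw [hv]
  simp [map_sum]

lemma pder_cont {n : ℕ} {Ω : Set (Fin n → ℂ)} (hΩ : IsOpen Ω)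
    {f : (Fin n → ℂ) → ℂ} (hf : ∀ z ∈ Ω, DifferentiableAt ℂ f z)
    {z₀ : Fin n → ℂ} (hz₀ : z₀ ∈ Ω) {ε : ℝ} (hε : 0 < ε) :
    ∃ δ > 0, ∀ x, dist x z₀ < δ → ∀ j : Fin n,
      ‖fderiv ℂ f x (Pi.single j 1) - fderiv ℂ f z₀ (Pi.single j 1)‖ ≤ ε := by
  rcases Metric.isOpen_iff.1 hΩ z₀ hz₀ with ⟨r, hr, hball⟩
  set R : ℝ := r / 3 with hRdef
  have hRpos : 0 < R := by positivity
  have hK : closedBall z₀ (2 * R) ⊆ Ω := fun y hy => by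
    apply hball
    rw [mem_ball]
    calc dist y z₀ ≤ 2 * R := mem_closedBall.1 hy
    _ < r := by rw [hRdef]; linarith
  have hcomp : IsCompact (closedBall z₀ (2 * R)) := isCompact_closedBall _ _
  have hcont : ContinuousOn f (closedBall z₀ (2 * R)) := fun y hy =>
    (hf y (hK hy)).continuousAt.continuousWithinAt
  have huc := hcomp.uniformContinuousOn_of_continuous hcont
  rw [Metric.uniformContinuousOn_iff] at huc
  obtain ⟨δ₀, hδ₀, hucd⟩ := huc (ε * R) (by positivity)
  refine ⟨min δ₀ R, by positivity, fun x hx j => ?_⟩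
  set e : Fin n → ℂ := Pi.single j 1 with hedef
  have he : ‖e‖ ≤ 1 := by
    rw [pi_norm_le_iff_of_nonneg zero_le_one]
    intro k
    rw [hedef, Pi.single_apply]
    split_ifs <;> simp
  have hxδ : dist x z₀ < δ₀ := lt_of_lt_of_le hx (min_le_left _ _)
  have hxR : dist x z₀ < R := lt_of_lt_of_le hx (min_le_right _ _)
  have hmem : ∀ t : ℂ, ‖t‖ ≤ R →
      x + t • e ∈ closedBall z₀ (2 * R) ∧ z₀ + t • e ∈ closedBall z₀ (2 * R) := by
    intro t ht
    have hte : ‖t • e‖ ≤ R := by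
      calc ‖t • e‖ = ‖t‖ * ‖e‖ := norm_smul t e
      _ ≤ R * 1 := mul_le_mul ht he (norm_nonneg _) hRpos.le
      _ = R := mul_one R
    constructor
    · rw [mem_closedBall]
      calc dist (x + t • e) z₀ ≤ dist (x + t • e) x + dist x z₀ := dist_triangle _ _ _
      _ ≤ R + R := by
          refine add_le_add ?_ hxR.le
          rw [dist_eq_norm, add_sub_cancel_left]
          exact hte
      _ = 2 * R := by ring
    · rw [mem_closedBall]
      calc dist (z₀ + t • e) z₀ ≤ ‖t • e‖ := by
            rw [dist_eq_norm, add_sub_cancel_left]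
      _ ≤ 2 * R := by linarith
  set u : ℂ → ℂ := fun t => f (x + t • e) - f (z₀ + t • e) with hudef
  have hder : ∀ t : ℂ, ‖t‖ ≤ R → HasDerivAt u
      (fderiv ℂ f (x + t • e) e - fderiv ℂ f (z₀ + t • e) e) t := by
    intro t ht
    exact (sliceDeriv (hf _ (hK (hmem t ht).1))).sub (sliceDeriv (hf _ (hK (hmem t ht).2)))
  have hdiff : DifferentiableOn ℂ u (closedBall (0:ℂ) R) := by
    intro t ht
    rw [mem_closedBall, dist_zero_right] at ht
    exact ((hder t ht).differentiableAt).differentiableWithinAt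
  have hdc : DiffContOnCl ℂ u (ball (0:ℂ) R) := by
    apply DifferentiableOn.diffContOnCl
    rwa [closure_ball (0:ℂ) (ne_of_gt hRpos)]
  have hsph : ∀ t ∈ sphere (0:ℂ) R, ‖u t‖ ≤ ε * R := by
    intro t ht
    rw [mem_sphere, dist_zero_right] at ht
    have h1 := hmem t ht.le
    have hd : dist (x + t • e) (z₀ + t • e) < δ₀ := by
      rwa [dist_add_right]
    calc ‖u t‖ = dist (f (x + t • e)) (f (z₀ + t • e)) := by rw [dist_eq_norm]
    _ ≤ ε * R := (hucd _ h1.1 _ h1.2 hd).le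
  have hd0 : ‖deriv u 0‖ ≤ ε * R / R :=
    Complex.norm_deriv_le_of_forall_mem_sphere_norm_le hRpos hdc hsph
  have h0 := hder 0 (by simp [hRpos.le])
  have hx0 : x + (0:ℂ) • e = x := by simp
  have hz0 : z₀ + (0:ℂ) • e = z₀ := by simp
  rw [hx0, hz0] at h0
  rw [h0.deriv] at hd0
  rwa [mul_div_assoc, div_self (ne_of_gt hRpos), mul_one] at hd0

end Aux

/-- quantitative separation estimate from the proof of Proposition 1.1. -/
theorem stmt_0 {n : ℕ} (Ω : Set (Fin n → ℂ)) (hΩ : IsOpen Ω)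
    (f : (Fin n → ℂ) → ℂ) (hf : ∀ z ∈ Ω, DifferentiableAt ℂ f z)
    (z₀ : Fin n → ℂ) (hz₀ : z₀ ∈ Ω) (hder : ∀ j : Fin n, pder f z₀ j ≠ 0) :
    ∃ N : Set (Fin n → ℂ), IsOpen N ∧ Convex ℝ N ∧ z₀ ∈ N ∧ N ⊆ Ω ∧
      ∀ z ∈ N, ∀ w ∈ N, z ≠ w →
        (∀ j : Fin n, ∃ r : ℝ, 0 ≤ r ∧ pder f z₀ j * (w j - z j) = (r : ℂ)) →
        ‖f w - f z‖ >
            (1 / 2) * ∑ j, ‖pder f z₀ j‖ * ‖w j - z j‖ ∧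
          (1 / 2) * ∑ j, ‖pder f z₀ j‖ * ‖w j - z j‖ > 0 := by
  rcases Nat.eq_zero_or_pos n with hn | hn
  · subst hn
    rcases Metric.isOpen_iff.1 hΩ z₀ hz₀ with ⟨ε, hε, hball⟩
    refine ⟨Metric.ball z₀ ε, Metric.isOpen_ball, convex_ball _ _,
      Metric.mem_ball_self hε, hball, fun z _ w _ hzw _ => ?_⟩
    exact absurd (funext fun i => i.elim0) hzw
  · haveI : Nonempty (Fin n) := ⟨⟨0, hn⟩⟩
    set m : ℝ := Finset.univ.inf' Finset.univ_nonempty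
      (fun j => ‖pder f z₀ j‖) with hmdef
    have hm : 0 < m := by
      rw [hmdef, Finset.lt_inf'_iff]
      intro j _
      exact norm_pos_iff.2 (hder j)
    have hmle : ∀ j : Fin n, m ≤ ‖pder f z₀ j‖ := fun j =>
      Finset.inf'_le _ (Finset.mem_univ j)
    have hε₀ : (0:ℝ) < m / (4 * n) := by positivity
    obtain ⟨δ, hδ, hδbd⟩ := pder_cont hΩ hf hz₀ hε₀
    rcases Metric.isOpen_iff.1 hΩ z₀ hz₀ with ⟨r₀, hr₀, hball⟩
    set ρ : ℝ := min δ r₀ with hρdef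
    have hρ : 0 < ρ := lt_min hδ hr₀
    refine ⟨Metric.ball z₀ ρ, Metric.isOpen_ball, convex_ball _ _,
      Metric.mem_ball_self hρ, fun y hy => hball (Metric.mem_ball.2 (lt_of_lt_of_le (Metric.mem_ball.1 hy) (min_le_right _ _))),
      fun z hz w hw hzw hr => ?_⟩
    -- the derivative bound on the ball
    have hbd : ∀ x ∈ Metric.ball z₀ ρ, ‖fderiv ℂ f x - fderiv ℂ f z₀‖ ≤ m / 4 := by
      intro x hx
      have hx' : dist x z₀ < δ := lt_of_lt_of_le hx (min_le_left _ _)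
      apply ContinuousLinearMap.opNorm_le_bound _ (by positivity)
      intro v
      calc ‖(fderiv ℂ f x - fderiv ℂ f z₀) v‖
          = ‖∑ j, v j • (fderiv ℂ f x - fderiv ℂ f z₀) (Pi.single j 1)‖ := by
            rw [clm_apply_eq_sum]
        _ ≤ ∑ j, ‖v j • (fderiv ℂ f x - fderiv ℂ f z₀) (Pi.single j 1)‖ :=
            norm_sum_le _ _
        _ ≤ ∑ j : Fin n, ‖v‖ * (m / (4 * n)) := by
            apply Finset.sum_le_sum
            intro j _
            rw [norm_smul]
            apply mul_le_mul (norm_le_pi_norm v j) ?_ (norm_nonneg _) (norm_nonneg _)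
            simpa using hδbd x hx' j
        _ = m / 4 * ‖v‖ := by
            rw [Finset.sum_const, Finset.card_univ, Fintype.card_fin, nsmul_eq_mul]
            field_simp
    -- mean value error estimate
    have herr : ‖f w - f z - (fderiv ℂ f z₀) (w - z)‖ ≤ m / 4 * ‖w - z‖ :=
      (convex_ball z₀ ρ).norm_image_sub_le_of_norm_fderiv_le'
        (fun x hx => hf x (hball (Metric.mem_ball.2 (lt_of_lt_of_le (Metric.mem_ball.1 hx) (min_le_right _ _))))) hbd hz hw
    -- the nonnegativity data
    choose rr hrr0 hrreq using hr
    have hrrval : ∀ j, rr j = ‖pder f z₀ j‖ * ‖w j - z j‖ := by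
      intro j
      have := congrArg (‖·‖) (hrreq j)
      rwa [norm_mul, Complex.norm_of_nonneg (hrr0 j), eq_comm] at this
    set S : ℝ := ∑ j, ‖pder f z₀ j‖ * ‖w j - z j‖ with hSdef
    have hSrr : S = ∑ j, rr j := by
      rw [hSdef]; exact Finset.sum_congr rfl fun j _ => (hrrval j).symm
    -- value of the linear term
    have hA : (fderiv ℂ f z₀) (w - z) = (S : ℂ) := by
      rw [clm_apply_eq_sum]
      have : ∀ j : Fin n, (w - z) j • (fderiv ℂ f z₀) (Pi.single j 1) = ((rr j : ℝ) : ℂ) := by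
        intro j
        rw [← hrreq j]
        simp [pder, Pi.sub_apply]
        ring
      rw [Finset.sum_congr rfl fun j _ => this j, hSrr]
      push_cast
      rfl
    -- S > 0
    have hS0 : 0 < S := by
      obtain ⟨j₀, hj₀⟩ := Function.ne_iff.1 hzw
      rw [hSdef]
      apply Finset.sum_pos' (fun j _ => by positivity)
      refine ⟨j₀, Finset.mem_univ _, ?_⟩
      have h1 : 0 < ‖pder f z₀ j₀‖ := norm_pos_iff.2 (hder j₀)
      have h2 : 0 < ‖w j₀ - z j₀‖ := by
        rw [norm_pos_iff]
        exact sub_ne_zero_of_ne (Ne.symm hj₀)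
      positivity
    -- m * ‖w - z‖ ≤ S
    have hwz : m * ‖w - z‖ ≤ S := by
      have h1 : ‖w - z‖ ≤ ∑ j, ‖w j - z j‖ := by
        rw [pi_norm_le_iff_of_nonneg (Finset.sum_nonneg fun j _ => norm_nonneg _)]
        intro k
        have : ‖(w - z) k‖ = ‖w k - z k‖ := by
          rw [Pi.sub_apply]
        rw [this]
        exact Finset.single_le_sum (fun (j : Fin n) _ => norm_nonneg (w j - z j)) (Finset.mem_univ k)
      calc m * ‖w - z‖ ≤ m * ∑ j, ‖w j - z j‖ :=
            mul_le_mul_of_nonneg_left h1 hm.le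
        _ = ∑ j, m * ‖w j - z j‖ := Finset.mul_sum _ _ _
        _ ≤ S := Finset.sum_le_sum fun j _ =>
            mul_le_mul_of_nonneg_right (hmle j) (norm_nonneg _)
    have herr' : ‖f w - f z - (fderiv ℂ f z₀) (w - z)‖ ≤ S / 4 := by
      calc ‖f w - f z - (fderiv ℂ f z₀) (w - z)‖ ≤ m / 4 * ‖w - z‖ := herr
        _ = (m * ‖w - z‖) / 4 := by ring
        _ ≤ S / 4 := by linarith
    have hlow : S - S / 4 ≤ ‖f w - f z‖ := by
      have h1 : ‖(fderiv ℂ f z₀) (w - z)‖ = S := by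
        rw [hA, Complex.norm_of_nonneg hS0.le]
      have h2 := norm_sub_norm_le ((fderiv ℂ f z₀) (w - z)) (f w - f z)
      have h3 : ‖(fderiv ℂ f z₀) (w - z) - (f w - f z)‖
          = ‖f w - f z - (fderiv ℂ f z₀) (w - z)‖ := norm_sub_rev _ _
      linarith
    exact ⟨by linarith, by linarith⟩
end

section
/- Let Ω ⊆ ℂⁿ be a convex Reinhardt domain and let f be holomorphic on Ω with Re(∂f/∂z_j(z)) > 0 for all z ∈ Ω and all j = 1,…,n. Then f separates all pairs of points whose difference has nonnegative real coordinates: for all z, w ∈ Ω with z ≠ w such that w_j − z_j is a nonnegative real number for every j = 1,…,n, one has f(z) ≠ f(w). (Multidimensional Noshiro–Warschawski criterion, Corollary 2.1.) -/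
open Complex Finset

/-- multidimensional Noshiro–Warschawski criterion (Corollary 2.1). -/
theorem stmt_3 {n : ℕ} (Ω : Set (Fin n → ℂ)) (hΩ : IsOpen Ω) (hconv : Convex ℝ Ω)
    (hRein : ∀ z ∈ Ω, ∀ θ : Fin n → ℝ,
      (fun j => Complex.exp ((θ j : ℂ) * Complex.I) * z j) ∈ Ω)
    (f : (Fin n → ℂ) → ℂ) (hf : ∀ z ∈ Ω, DifferentiableAt ℂ f z)
    (hre : ∀ z ∈ Ω, ∀ j : Fin n, 0 < (pder f z j).re) :
    ∀ z ∈ Ω, ∀ w ∈ Ω, z ≠ w → (∀ j : Fin n, ∃ r : ℝ, 0 ≤ r ∧ w j - z j = (r : ℂ)) →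
      f z ≠ f w := by
  intro z hz w hw hne hr
  choose r hr0 hreq using hr
  have hrw : w - z = fun j => (r j : ℂ) := by
    funext j; simpa using hreq j
  set γ : ℝ → (Fin n → ℂ) := fun t => z + t • (w - z) with hγ
  have hmem : ∀ t ∈ Set.Icc (0:ℝ) 1, γ t ∈ Ω := by
    intro t ht
    have h := hconv hz hw (by linarith [ht.1, ht.2] : (0:ℝ) ≤ 1 - t) ht.1 (by ring)
    convert h using 1
    simp only [hγ]
    module
  have hderiv : ∀ t ∈ Set.Icc (0:ℝ) 1,
      HasDerivAt (fun t => (f (γ t)).re) (∑ j, r j * (pder f (γ t) j).re) t := by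
    intro t ht
    have hγd : HasDerivAt γ (w - z) t := by
      exact (((hasDerivAt_id t).smul_const (w - z)).const_add z).congr_deriv (one_smul ℝ _)
    have hfd : HasFDerivAt f (fderiv ℂ f (γ t)) (γ t) := (hf _ (hmem t ht)).hasFDerivAt
    have h1 : HasDerivAt (fun t => f (γ t)) (fderiv ℂ f (γ t) (w - z)) t :=
      (hfd.restrictScalars ℝ).comp_hasDerivAt t hγd
    have h2 : fderiv ℂ f (γ t) (w - z) = ∑ j, (r j : ℂ) * pder f (γ t) j := by
      have hsum : (w - z) = ∑ j, (r j : ℂ) • (Pi.single j 1 : Fin n → ℂ) := by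
        rw [hrw]; funext k
        simp [Pi.single_apply, Finset.sum_ite_eq' (Finset.univ : Finset (Fin n)) k]
      rw [hsum, map_sum]
      simp [pder, smul_eq_mul]
    have h3 : HasDerivAt (fun t => (f (γ t)).re) ((fderiv ℂ f (γ t) (w - z)).re) t := by
      have := (Complex.reCLM.hasFDerivAt.comp t h1.hasFDerivAt).hasDerivAt
      simpa [Function.comp_def] using this
    rw [h2] at h3
    convert h3 using 1
    rw [Complex.re_sum]
    exact Finset.sum_congr rfl fun j _ => (Complex.re_ofReal_mul _ _).symm
  have hcont : ContinuousOn (fun t => (f (γ t)).re) (Set.Icc (0:ℝ) 1) :=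
    fun t ht => ((hderiv t ht).continuousAt).continuousWithinAt
  have hpos : ∀ t ∈ Set.Icc (0:ℝ) 1, 0 < ∑ j, r j * (pder f (γ t) j).re := by
    intro t ht
    obtain ⟨j, hj⟩ : ∃ j, z j ≠ w j := by
      by_contra hc; push_neg at hc; exact hne (funext hc)
    have hrj : 0 < r j := by
      rcases (hr0 j).lt_or_eq with h | h
      · exact h
      · exfalso
        apply hj
        have h2 := hreq j
        rw [← h] at h2
        simpa [sub_eq_zero, eq_comm] using h2
    exact Finset.sum_pos' (fun i _ => mul_nonneg (hr0 i) (le_of_lt (hre _ (hmem t ht) i)))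
      ⟨j, Finset.mem_univ j, mul_pos hrj (hre _ (hmem t ht) j)⟩
  have hmono : StrictMonoOn (fun t => (f (γ t)).re) (Set.Icc (0:ℝ) 1) := by
    apply strictMonoOn_of_deriv_pos (convex_Icc 0 1) hcont
    intro x hx
    rw [interior_Icc] at hx
    rw [(hderiv x ⟨le_of_lt hx.1, le_of_lt hx.2⟩).deriv]
    exact hpos x ⟨le_of_lt hx.1, le_of_lt hx.2⟩
  have hlt := hmono (Set.left_mem_Icc.mpr zero_le_one) (Set.right_mem_Icc.mpr zero_le_one)
    zero_lt_one
  have hγ0 : γ 0 = z := by simp [hγ]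
  have hγ1 : γ 1 = w := by simp [hγ]
  have hlt' : (f z).re < (f w).re := by simpa [hγ0, hγ1] using hlt
  intro heq
  rw [heq] at hlt'
  exact lt_irrefl _ hlt'
end

section
/- Let h and g be holomorphic on the unit polydisk 𝔻ⁿ and let f = h + conj∘g be the associated pluriharmonic mapping. Then the following are equivalent: (i) for every λ ∈ ℂ with |λ| = 1, the map z ↦ h(z) + λ·conj(g(z)) is injective on 𝔻ⁿ (f is stably pluriharmonic univalent); (ii) for every λ ∈ ℂ with |λ| = 1, the holomorphic map z ↦ h(z) + λ·g(z) is injective on 𝔻ⁿ (F = h + g is stably holomorphic univalent). -/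
open Complex Finset

/-- Theorem 2.2: `f = h + conj ∘ g` is stably pluriharmonic univalent on the
unit polydisk iff `F = h + g` is stably holomorphic univalent there. -/
theorem stmt_4 {n : ℕ} (h g : (Fin n → ℂ) → ℂ)
    (hh : ∀ z ∈ polydisk n, DifferentiableAt ℂ h z)
    (hg : ∀ z ∈ polydisk n, DifferentiableAt ℂ g z) :
    (∀ lam : ℂ, ‖lam‖ = 1 →
        Set.InjOn (fun z => h z + lam * starRingEnd ℂ (g z)) (polydisk n)) ↔
      (∀ lam : ℂ, ‖lam‖ = 1 →
        Set.InjOn (fun z => h z + lam * g z) (polydisk n)) := by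
  constructor
  · intro H lam hlam z hz w hw hzw
    simp only at hzw
    have key : h z - h w = lam * (g w - g z) := by linear_combination hzw
    by_cases hgzw : g z = g w
    · have hhe : h z = h w := by
        rw [hgzw, sub_self, mul_zero, sub_eq_zero] at key; exact key
      exact H 1 (by simp) hz hw (by simp [hhe, hgzw])
    · have hne : g w - g z ≠ 0 := sub_ne_zero.mpr (fun e => hgzw e.symm)
      have hcne : (starRingEnd ℂ) (g w - g z) ≠ 0 :=
        (map_ne_zero (starRingEnd ℂ)).mpr hne
      set μ := lam * (g w - g z) / (starRingEnd ℂ) (g w - g z) with hμdef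
      have hμ : ‖μ‖ = 1 := by
        rw [hμdef, norm_div, norm_mul, hlam, Complex.norm_conj, one_mul,
          div_self (norm_ne_zero_iff.mpr hne)]
      apply H μ hμ hz hw
      simp only
      have hmul : μ * (starRingEnd ℂ (g w) - starRingEnd ℂ (g z)) = lam * (g w - g z) := by
        rw [hμdef, ← map_sub, div_mul_eq_mul_div, mul_div_assoc,
          div_self hcne, mul_one]
      linear_combination key - hmul
  · intro H lam hlam z hz w hw hzw
    simp only at hzw
    have key : h z - h w = lam * (starRingEnd ℂ (g w) - starRingEnd ℂ (g z)) := by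
      linear_combination hzw
    by_cases hgzw : g z = g w
    · have hhe : h z = h w := by
        rw [hgzw, sub_self, mul_zero, sub_eq_zero] at key; exact key
      exact H 1 (by simp) hz hw (by simp [hhe, hgzw])
    · have hne : g w - g z ≠ 0 := sub_ne_zero.mpr (fun e => hgzw e.symm)
      have hcne : (starRingEnd ℂ) (g w - g z) ≠ 0 :=
        (map_ne_zero (starRingEnd ℂ)).mpr hne
      set μ := lam * (starRingEnd ℂ) (g w - g z) / (g w - g z) with hμdef
      have hμ : ‖μ‖ = 1 := by
        rw [hμdef, norm_div, norm_mul, hlam, Complex.norm_conj, one_mul,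
          div_self (norm_ne_zero_iff.mpr hne)]
      apply H μ hμ hz hw
      simp only
      have hmul : μ * (g w - g z) = lam * (starRingEnd ℂ (g w) - starRingEnd ℂ (g z)) := by
        rw [hμdef, ← map_sub, div_mul_eq_mul_div, mul_div_assoc,
          div_self hne, mul_one]
      linear_combination key - hmul
end

section
/- Let M > 0 and let f ∈ 𝓑_n(M). Then for every z ∈ 𝔻ⁿ and every k = 1,…,n, |∂f/∂z_k(z) − 1| ≤ M·‖z‖_∞; in particular 1 − M‖z‖_∞ ≤ |∂f/∂z_k(z)| ≤ 1 + M‖z‖_∞. (Derivative estimate from the proof of Theorem 2.4.) -/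
open Complex Finset
open Metric MeasureTheory Set

lemma polydisk_eq (n : ℕ) : polydisk n = Metric.ball (0 : Fin n → ℂ) 1 := by
  ext z
  simp only [polydisk, Set.mem_setOf_eq, Metric.mem_ball, dist_zero_right]
  rw [pi_norm_lt_iff one_pos]

lemma loc_lip {n : ℕ} {f : (Fin n → ℂ) → ℂ} {s : Set (Fin n → ℂ)} (hs : IsOpen s)
    (hd : ∀ z ∈ s, DifferentiableAt ℂ f z) {w₀ : Fin n → ℂ} (hw : w₀ ∈ s) :
    ∃ δ > 0, ∃ C ≥ 0, Metric.closedBall w₀ (3 * δ) ⊆ s ∧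
      ∀ w₁ ∈ Metric.closedBall w₀ (2 * δ), ∀ w₂ ∈ Metric.closedBall w₀ (2 * δ),
        ‖f w₁ - f w₂‖ ≤ C * ‖w₁ - w₂‖ := by
  obtain ⟨r, hr0, hrs⟩ := Metric.isOpen_iff.1 hs w₀ hw
  set δ := r / 4 with hδdef
  have hδ0 : 0 < δ := by positivity
  have hcb : Metric.closedBall w₀ (3 * δ) ⊆ s :=
    (Metric.closedBall_subset_ball (by rw [hδdef]; linarith)).trans hrs
  have hfc : ContinuousOn f s := fun x hx => (hd x hx).continuousAt.continuousWithinAt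
  obtain ⟨C₀, hC₀⟩ := (isCompact_closedBall w₀ (3 * δ)).exists_bound_of_continuousOn
    (hfc.mono hcb)
  have hC₀0 : 0 ≤ C₀ := le_trans (norm_nonneg (f w₀))
    (hC₀ w₀ (Metric.mem_closedBall_self (by positivity)))
  refine ⟨δ, hδ0, C₀ / δ, by positivity, hcb, ?_⟩
  have hfb : ∀ w ∈ Metric.closedBall w₀ (2 * δ), ‖fderiv ℂ f w‖ ≤ C₀ / δ := by
    intro w hwb
    refine ContinuousLinearMap.opNorm_le_bound _ (by positivity) fun v => ?_
    rcases eq_or_ne v 0 with rfl | hv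
    · simp
    have hv0 : 0 < ‖v‖ := norm_pos_iff.2 hv
    set ε := δ / ‖v‖ with hεdef
    have hε0 : 0 < ε := by positivity
    have key : ∀ μ : ℂ, ‖μ‖ ≤ ε → w + μ • v ∈ Metric.closedBall w₀ (3 * δ) := by
      intro μ hμ
      rw [Metric.mem_closedBall, dist_eq_norm]
      have h1 : ‖w + μ • v - w₀‖ ≤ ‖w - w₀‖ + ‖μ • v‖ := by
        calc ‖w + μ • v - w₀‖ = ‖(w - w₀) + μ • v‖ := by ring_nf
        _ ≤ ‖w - w₀‖ + ‖μ • v‖ := norm_add_le _ _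
      have h2 : ‖μ • v‖ ≤ δ := by
        rw [norm_smul]
        calc ‖μ‖ * ‖v‖ ≤ ε * ‖v‖ := by gcongr
        _ = δ := by rw [hεdef]; field_simp
      have h3 : ‖w - w₀‖ ≤ 2 * δ := by
        rw [Metric.mem_closedBall, dist_eq_norm] at hwb; exact hwb
      linarith
    have hline : ∀ μ : ℂ, HasDerivAt (fun μ : ℂ => w + μ • v) v μ := by
      intro μ
      simpa using ((hasDerivAt_id μ).smul_const v).const_add w
    have hφd : DifferentiableOn ℂ (fun μ : ℂ => f (w + μ • v)) (Metric.closedBall 0 ε) := by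
      intro μ hμ
      have := ((hd _ (hcb (key μ (by simpa [dist_eq_norm] using hμ)))).hasFDerivAt.comp_hasDerivAt
        μ (hline μ)).differentiableAt
      exact this.differentiableWithinAt
    have hDC : DiffContOnCl ℂ (fun μ : ℂ => f (w + μ • v)) (Metric.ball 0 ε) :=
      DifferentiableOn.diffContOnCl (by rw [closure_ball (0:ℂ) hε0.ne']; exact hφd)
    have hder : HasDerivAt (fun μ : ℂ => f (w + μ • v)) (fderiv ℂ f w v) 0 := by
      have hws : w ∈ s := hcb (Metric.closedBall_subset_closedBall (by linarith) hwb)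
      have h0 : HasFDerivAt f (fderiv ℂ f w) (w + (0:ℂ) • v) := by
        simpa using (hd w hws).hasFDerivAt
      simpa [Function.comp_def] using h0.comp_hasDerivAt 0 (hline 0)
    have hball : ∀ μ ∈ Metric.sphere (0:ℂ) ε, ‖f (w + μ • v)‖ ≤ C₀ := by
      intro μ hμ
      exact hC₀ _ (key μ (by simp [mem_sphere_iff_norm] at hμ; simp [hμ]))
    calc ‖fderiv ℂ f w v‖ = ‖deriv (fun μ : ℂ => f (w + μ • v)) 0‖ := by rw [hder.deriv]
    _ ≤ C₀ / ε := Complex.norm_deriv_le_of_forall_mem_sphere_norm_le hε0 hDC hball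
    _ = C₀ / δ * ‖v‖ := by rw [hεdef]; field_simp
  intro w₁ hw₁ w₂ hw₂
  exact Convex.norm_image_sub_le_of_norm_hasFDerivWithin_le
    (fun x hx => ((hd x (hcb (Metric.closedBall_subset_closedBall (by linarith) hx))).hasFDerivAt).hasFDerivWithinAt)
    hfb (convex_closedBall _ _) hw₂ hw₁

open Real in
lemma diff_dirderiv {n : ℕ} {f : (Fin n → ℂ) → ℂ} {s : Set (Fin n → ℂ)} (hs : IsOpen s)
    (hd : ∀ z ∈ s, DifferentiableAt ℂ f z) (v : Fin n → ℂ) {w₀ : Fin n → ℂ} (hw : w₀ ∈ s) :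
    DifferentiableAt ℂ (fun w => fderiv ℂ f w v) w₀ := by
  obtain ⟨δ, hδ0, C, hC0, hcb, hlip⟩ := loc_lip hs hd hw
  set ε := δ / (‖v‖ + 1) with hεdef
  have hv1 : 0 < ‖v‖ + 1 := by positivity
  have hε0 : 0 < ε := by positivity
  have hεv : ε * ‖v‖ ≤ δ := by
    rw [hεdef, div_mul_eq_mul_div, div_le_iff₀ hv1]
    nlinarith [norm_nonneg v, hδ0.le]
  set c : ℝ → ℂ := fun θ => circleMap 0 ε θ * I * (circleMap 0 ε θ) ^ (-2 : ℤ) with hc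
  set G : (Fin n → ℂ) → ℝ → ℂ := fun w θ => c θ * f (w + circleMap 0 ε θ • v) with hG
  have hm_abs : ∀ θ, ‖circleMap 0 ε θ‖ = ε := fun θ => by
    simp [norm_circleMap_zero, abs_of_pos hε0]
  have hc_abs : ∀ θ, ‖c θ‖ = ε⁻¹ := by
    intro θ
    rw [hc]
    simp only [norm_mul, norm_zpow, hm_abs, Complex.norm_I, mul_one]
    rw [zpow_neg, zpow_two]
    field_simp
  -- membership of the translated points
  have hmem : ∀ w ∈ Metric.ball w₀ δ, ∀ μ : ℂ, ‖μ‖ ≤ ε →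
      w + μ • v ∈ Metric.closedBall w₀ (2 * δ) := by
    intro w hwb μ hμ
    rw [Metric.mem_closedBall, dist_eq_norm]
    have h1 : ‖w + μ • v - w₀‖ ≤ ‖w - w₀‖ + ‖μ • v‖ := by
      calc ‖w + μ • v - w₀‖ = ‖(w - w₀) + μ • v‖ := by ring_nf
      _ ≤ ‖w - w₀‖ + ‖μ • v‖ := norm_add_le _ _
    have h2 : ‖μ • v‖ ≤ δ := by
      rw [norm_smul]
      calc ‖μ‖ * ‖v‖ ≤ ε * ‖v‖ := by gcongr
      _ ≤ δ := hεv
    have h3 : ‖w - w₀‖ ≤ δ := by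
      rw [Metric.mem_ball, dist_eq_norm] at hwb; exact hwb.le
    linarith
  have hmem' : ∀ w ∈ Metric.ball w₀ δ, ∀ μ : ℂ, ‖μ‖ ≤ ε → w + μ • v ∈ s := fun w hwb μ hμ =>
    hcb (Metric.closedBall_subset_closedBall (by linarith) (hmem w hwb μ hμ))
  have hline : ∀ (w : Fin n → ℂ) (μ : ℂ), HasDerivAt (fun μ : ℂ => w + μ • v) v μ := by
    intro w μ
    simpa using ((hasDerivAt_id μ).smul_const v).const_add w
  have hfc : ContinuousOn f s := fun x hx => (hd x hx).continuousAt.continuousWithinAt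
  -- representation of the directional derivative as a circle integral
  have hrep : ∀ w ∈ Metric.ball w₀ δ,
      fderiv ℂ f w v = (2 * π * I : ℂ)⁻¹ • ∫ θ in Set.Ioc 0 (2 * π), G w θ := by
    intro w hwb
    have hφd : DifferentiableOn ℂ (fun μ : ℂ => f (w + μ • v)) (Metric.closedBall 0 ε) := by
      intro μ hμ
      have hμ' : ‖μ‖ ≤ ε := by simpa [dist_eq_norm] using hμ
      exact (((hd _ (hmem' w hwb μ hμ')).hasFDerivAt.comp_hasDerivAt μ
        (hline w μ)).differentiableAt).differentiableWithinAt
    have hDC : DiffContOnCl ℂ (fun μ : ℂ => f (w + μ • v)) (Metric.ball 0 ε) :=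
      DifferentiableOn.diffContOnCl (by rw [closure_ball (0:ℂ) hε0.ne']; exact hφd)
    have hder : HasDerivAt (fun μ : ℂ => f (w + μ • v)) (fderiv ℂ f w v) 0 := by
      have h0 : HasFDerivAt f (fderiv ℂ f w) (w + (0:ℂ) • v) := by
        simpa using (hd w (by simpa using hmem' w hwb 0 (by simp [hε0.le]))).hasFDerivAt
      simpa [Function.comp_def] using h0.comp_hasDerivAt 0 (hline w 0)
    have h1 := DiffContOnCl.deriv_eq_smul_circleIntegral hε0 hDC
    rw [hder.deriv] at h1
    rw [← inv_smul_eq_iff₀ (by simp [Real.pi_ne_zero] : (2 * π * I : ℂ) ≠ 0)] at h1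
    rw [← h1]
    congr 1
    rw [circleIntegral, intervalIntegral.integral_of_le (by positivity)]
    refine setIntegral_congr_fun measurableSet_Ioc fun θ _ => ?_
    simp only [hG, hc, deriv_circleMap, sub_zero, smul_eq_mul]
    rw [zpow_neg, zpow_two]
    ring
  -- parametric differentiation
  have cont_m : Continuous (circleMap 0 ε) := continuous_circleMap 0 ε
  have cont_c : Continuous c := by
    rw [hc]
    exact (cont_m.mul continuous_const).mul
      (cont_m.zpow₀ _ (fun θ => Or.inl (circleMap_ne_center hε0.ne')))
  have cont_f : ∀ w ∈ Metric.ball w₀ δ, Continuous fun θ => f (w + circleMap 0 ε θ • v) := by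
    intro w hwb
    refine hfc.comp_continuous (continuous_const.add (cont_m.smul continuous_const)) fun θ => ?_
    exact hmem' w hwb _ (le_of_eq (hm_abs θ))
  have cont_G : ∀ w ∈ Metric.ball w₀ δ, Continuous (G w) := fun w hwb =>
    cont_c.mul (cont_f w hwb)
  set μm : Measure ℝ := volume.restrict (Set.Ioc 0 (2 * π)) with hμm
  set F' : ℝ → ((Fin n → ℂ) →L[ℂ] ℂ) :=
    fun θ => c θ • fderiv ℂ f (w₀ + circleMap 0 ε θ • v) with hF'
  have hw₀b : w₀ ∈ Metric.ball w₀ δ := Metric.mem_ball_self hδ0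
  have key := hasFDerivAt_integral_of_dominated_loc_of_lip' (μ := μm)
    (F := G) (F' := F') (x₀ := w₀) (bound := fun _ => ε⁻¹ * C) (Metric.ball_mem_nhds w₀ hδ0)
    (fun x hx => (cont_G x hx).aestronglyMeasurable)
    ((cont_G w₀ hw₀b).integrableOn_Ioc)
    (by
      apply StronglyMeasurable.aestronglyMeasurable
      exact cont_c.stronglyMeasurable.smul
        (((measurable_fderiv ℂ f).comp
          ((continuous_const.add (cont_m.smul continuous_const)).measurable)).stronglyMeasurable))
    (Filter.Eventually.of_forall (fun θ => by
      intro x hx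
      have hx2 := hmem x hx (circleMap 0 ε θ) (le_of_eq (hm_abs θ))
      have hw2 := hmem w₀ hw₀b (circleMap 0 ε θ) (le_of_eq (hm_abs θ))
      have : G x θ - G w₀ θ = c θ * (f (x + circleMap 0 ε θ • v) - f (w₀ + circleMap 0 ε θ • v)) := by
        rw [hG]; ring
      rw [this, norm_mul, hc_abs]
      have hl := hlip _ hx2 _ hw2
      have : x + circleMap 0 ε θ • v - (w₀ + circleMap 0 ε θ • v) = x - w₀ := by abel
      rw [this] at hl
      calc ε⁻¹ * ‖f (x + circleMap 0 ε θ • v) - f (w₀ + circleMap 0 ε θ • v)‖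
          ≤ ε⁻¹ * (C * ‖x - w₀‖) := mul_le_mul_of_nonneg_left hl (by positivity)
      _ = ε⁻¹ * C * ‖x - w₀‖ := by ring))
    (by
      rw [hμm]
      exact integrableOn_const measure_Ioc_lt_top.ne)
    (Filter.Eventually.of_forall (fun θ => by
      have hws : w₀ + circleMap 0 ε θ • v ∈ s := hmem' w₀ hw₀b _ (le_of_eq (hm_abs θ))
      have h1 : HasFDerivAt (fun w => f (w + circleMap 0 ε θ • v))
          (fderiv ℂ f (w₀ + circleMap 0 ε θ • v)) w₀ := by
        have := (hd _ hws).hasFDerivAt.comp w₀ ((hasFDerivAt_id w₀).add_const (circleMap 0 ε θ • v))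
        simpa [Function.comp_def] using this
      exact h1.const_mul (c θ)))
  obtain ⟨-, hFd⟩ := key
  have hdint : DifferentiableAt ℂ
      (fun w => (2 * π * I : ℂ)⁻¹ • ∫ θ in Set.Ioc 0 (2 * π), G w θ) w₀ :=
    (hFd.differentiableAt).fun_const_smul _
  exact hdint.congr_of_eventuallyEq
    (Filter.eventuallyEq_of_mem (Metric.ball_mem_nhds w₀ hδ0) fun w hwb => hrep w hwb)

/-- derivative estimate from the proof of Theorem 2.4. -/
theorem stmt_6 {n : ℕ} (M : ℝ) (hM : 0 < M) (f : (Fin n → ℂ) → ℂ) (hf : memB n M f) :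
    ∀ z ∈ polydisk n, ∀ k : Fin n,
      ‖pder f z k - 1‖ ≤ M * ‖z‖ ∧
        1 - M * ‖z‖ ≤ ‖pder f z k‖ ∧
        ‖pder f z k‖ ≤ 1 + M * ‖z‖ := by
  obtain ⟨hdiff, -, hnorm, hsum⟩ := hf
  intro z hz k
  have key : ‖pder f z k - 1‖ ≤ M * ‖z‖ := by
    rcases eq_or_ne z 0 with rfl | hz0
    · simp [hnorm k]
    · set ρ := ‖z‖ with hρdef
      have hρ0 : 0 < ρ := norm_pos_iff.2 hz0
      have hρ1 : ρ < 1 := by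
        rw [polydisk_eq] at hz
        simpa [dist_zero_right] using hz
      set R := ρ⁻¹ with hRdef
      have hR1 : 1 < R := (one_lt_inv₀ hρ0).2 hρ1
      have hdiff' : ∀ w ∈ Metric.ball (0 : Fin n → ℂ) 1, DifferentiableAt ℂ f w := by
        rw [← polydisk_eq]; exact hdiff
      set g : (Fin n → ℂ) → ℂ := fun w => fderiv ℂ f w (Pi.single k 1) with hg
      have hgd : ∀ w ∈ Metric.ball (0 : Fin n → ℂ) 1, DifferentiableAt ℂ g w := fun w hw =>
        diff_dirderiv isOpen_ball hdiff' _ hw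
      have hmem : ∀ l : ℂ, ‖l‖ < R → l • z ∈ Metric.ball (0 : Fin n → ℂ) 1 := by
        intro l hl
        rw [mem_ball_zero_iff, norm_smul]
        have := mul_lt_mul_of_pos_right hl hρ0
        rwa [hRdef, inv_mul_cancel₀ hρ0.ne'] at this
      set ψ : ℂ → ℂ := fun l => g (l • z) with hψ
      have hψad : ∀ l : ℂ, ‖l‖ < R → HasDerivAt ψ (fderiv ℂ g (l • z) z) l := by
        intro l hl
        have h1 := (hgd _ (hmem l hl)).hasFDerivAt.comp_hasDerivAt l
          ((hasDerivAt_id l).smul_const z)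
        simpa [Function.comp_def] using h1
      have hψdiff : DifferentiableOn ℂ ψ (Metric.ball (0:ℂ) R) := fun l hl =>
        ((hψad l (by simpa [dist_zero_right] using hl)).differentiableAt).differentiableWithinAt
      have hψderiv : ∀ l : ℂ, ‖l‖ < R → deriv ψ l = fderiv ℂ g (l • z) z := fun l hl =>
        (hψad l hl).deriv
      -- linear expansion
      have hexp : ∀ w : Fin n → ℂ, fderiv ℂ g w z = ∑ j, z j * pder2 f w j k := by
        intro w
        have hzsum : z = ∑ j, z j • (Pi.single j (1 : ℂ) : Fin n → ℂ) := by
          funext i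
          rw [Finset.sum_apply]
          simp [Pi.single_apply, mul_ite]
        conv_lhs => rw [hzsum, map_sum]
        refine Finset.sum_congr rfl fun j _ => ?_
        rw [_root_.map_smul]
        simp only [smul_eq_mul]
        rfl
      -- hypothesis bound
      have hBsum : ∀ w ∈ polydisk n, ∑ j, ‖w j * pder2 f w j k‖ ≤ M := by
        intro w hw
        refine le_trans ?_ (hsum w hw)
        refine Finset.sum_le_sum fun l _ => ?_
        have s1 : ‖w l * pder2 f w l k‖ ≤ ∑ k', ‖w l * pder2 f w l k'‖ :=
          Finset.single_le_sum (f := fun k' => ‖w l * pder2 f w l k'‖)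
            (fun _ _ => norm_nonneg _) (Finset.mem_univ k)
        have s2 : ∑ k', ‖w l * pder2 f w l k'‖ ≤
            ∑ j, ∑ k', ‖w l * pder2 f w j k'‖ :=
          Finset.single_le_sum (f := fun j => ∑ k', ‖w l * pder2 f w j k'‖)
            (fun j _ => Finset.sum_nonneg fun _ _ => norm_nonneg _) (Finset.mem_univ l)
        exact s1.trans s2
      have hder_bound : ∀ l : ℂ, ‖l‖ < R → ‖l‖ * ‖deriv ψ l‖ ≤ M := by
        intro l hl
        rw [hψderiv l hl, hexp]
        have h1 : ‖l‖ * ‖∑ j, z j * pder2 f (l • z) j k‖ = ‖∑ j, (l * z j) * pder2 f (l • z) j k‖ := by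
          rw [← norm_mul, Finset.mul_sum]
          congr 1
          exact Finset.sum_congr rfl fun j _ => by ring
        rw [h1]
        calc ‖∑ j, (l * z j) * pder2 f (l • z) j k‖ ≤ ∑ j, ‖(l * z j) * pder2 f (l • z) j k‖ :=
          norm_sum_le _ _
        _ = ∑ j, ‖(l • z) j * pder2 f (l • z) j k‖ := by
          refine Finset.sum_congr rfl fun j _ => ?_
          rw [Pi.smul_apply, smul_eq_mul]
        _ ≤ M := hBsum _ (by rw [polydisk_eq]; exact hmem l hl)
      have hdψ : DifferentiableOn ℂ (deriv ψ) (Metric.ball (0:ℂ) R) :=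
        ((hψdiff.analyticOnNhd isOpen_ball).deriv).differentiableOn
      have hmax : ∀ l : ℂ, ‖l‖ ≤ 1 → ‖deriv ψ l‖ ≤ M * ρ := by
        intro l hl
        refine le_of_forall_gt_imp_ge_of_dense fun b hb => ?_
        have hb0 : 0 < b := lt_of_le_of_lt (by positivity) hb
        set r := max 1 (M / b) with hrdef
        have hr1 : (1:ℝ) ≤ r := le_max_left _ _
        have hr0 : (0:ℝ) < r := lt_of_lt_of_le one_pos hr1
        have hrR : r < R := by
          apply max_lt hR1
          rw [div_lt_iff₀ hb0]
          have h3 := mul_lt_mul_of_pos_left hb (inv_pos.2 hρ0)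
          rw [show ρ⁻¹ * (M * ρ) = M * (ρ⁻¹ * ρ) by ring, inv_mul_cancel₀ hρ0.ne', mul_one] at h3
          exact h3
        have hsub : Metric.closedBall (0:ℂ) r ⊆ Metric.ball (0:ℂ) R :=
          Metric.closedBall_subset_ball hrR
        have hDC : DiffContOnCl ℂ (deriv ψ) (Metric.ball (0:ℂ) r) :=
          DifferentiableOn.diffContOnCl
            (by rw [closure_ball (0:ℂ) hr0.ne']; exact hdψ.mono hsub)
        have hfront : ∀ u ∈ frontier (Metric.ball (0:ℂ) r), ‖deriv ψ u‖ ≤ b := by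
          rw [frontier_ball (0:ℂ) hr0.ne']
          intro u hu
          have hun : ‖u‖ = r := by simpa [mem_sphere_iff_norm] using hu
          have h1 : ‖u‖ * ‖deriv ψ u‖ ≤ M := hder_bound u (by rw [hun]; exact hrR)
          rw [hun] at h1
          have h2 : ‖deriv ψ u‖ ≤ M / r := by
            rw [le_div_iff₀ hr0]
            linarith [h1]
          have h4 : M / r ≤ b := by
            rw [div_le_iff₀ hr0]
            calc M = b * (M / b) := by field_simp
            _ ≤ b * r := by
              exact mul_le_mul_of_nonneg_left (le_max_right _ _) hb0.le
          linarith
        refine Complex.norm_le_of_forall_mem_frontier_norm_le isBounded_ball hDC hfront ?_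
        rw [closure_ball (0:ℂ) hr0.ne']
        exact mem_closedBall_zero_iff.2 (hl.trans hr1)
      -- mean value inequality on the segment from 0 to 1
      have hMVT : ‖ψ 1 - ψ 0‖ ≤ M * ρ * ‖(1:ℂ) - 0‖ := by
        refine Convex.norm_image_sub_le_of_norm_hasDerivWithin_le
          (f' := deriv ψ) (s := Metric.closedBall (0:ℂ) 1) ?_ ?_
          (convex_closedBall _ _) ?_ ?_
        · intro x hx
          have hx1 : ‖x‖ < R := lt_of_le_of_lt (mem_closedBall_zero_iff.1 hx) hR1
          rw [hψderiv x hx1]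
          exact (hψad x hx1).hasDerivWithinAt
        · intro x hx
          exact hmax x (mem_closedBall_zero_iff.1 hx)
        · exact mem_closedBall_zero_iff.2 (by norm_num)
        · exact mem_closedBall_zero_iff.2 (by norm_num)
      have hψ1 : ψ 1 = pder f z k := by
        rw [hψ]
        simp only [one_smul]
        rfl
      have hψ0 : ψ 0 = 1 := by
        rw [hψ]
        simp only [zero_smul]
        exact hnorm k
      have heq : pder f z k - 1 = ψ 1 - ψ 0 := by rw [hψ1, hψ0]
      rw [heq]
      calc ‖ψ 1 - ψ 0‖ ≤ M * ρ * ‖(1:ℂ) - 0‖ := hMVT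
      _ = M * ρ := by simp
  refine ⟨key, ?_, ?_⟩
  · have h1 := norm_sub_norm_le (1 : ℂ) (pder f z k)
    rw [norm_sub_rev] at h1
    simp only [norm_one] at h1
    linarith
  · have h1 := norm_sub_norm_le (pder f z k) (1 : ℂ)
    simp only [norm_one] at h1
    linarith
end

section
/- Let M > 0 and let f ∈ 𝓑_n(M). Then for every z ∈ 𝔻ⁿ and every k = 1,…,n, |Σ_{j=1}^n z_j · ∂²f/∂z_j∂z_k(z)| ≤ M·‖z‖_∞. (Schwarz-lemma step in the proof of Theorem 2.4.) -/
open Complex Finset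

section AuxSchwarz
open Metric Set Filter Topology
variable {E : Type*} [NormedAddCommGroup E] [NormedSpace ℂ E] {g : E → ℂ} {c : E} {r C : ℝ}
lemma hasDerivAt_line {g : E → ℂ} {z v : E} {t : ℂ} (hg : DifferentiableAt ℂ g (z + t • v)) :
    HasDerivAt (fun s : ℂ => g (z + s • v)) (fderiv ℂ g (z + t • v) v) t := by
  have h2 : HasDerivAt (fun s : ℂ => z + s • v) v t := by
    simpa using ((hasDerivAt_id t).smul_const v).const_add z
  exact hg.hasFDerivAt.comp_hasDerivAt t h2

lemma cauchy_bound (hr : 0 < r) (hg : ∀ x ∈ ball c r, DifferentiableAt ℂ g x)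
    (hC : ∀ x ∈ ball c r, ‖g x‖ ≤ C) {z : E} (hz : z ∈ ball c (r / 2)) {v : E}
    (hv : ‖v‖ ≤ 1) : ‖fderiv ℂ g z v‖ ≤ 4 * C / r := by
  have hC0 : 0 ≤ C := (norm_nonneg _).trans (hC c (mem_ball_self hr))
  have hmem : ∀ t : ℂ, t ∈ ball (0 : ℂ) (r / 2) → z + t • v ∈ ball c r := by
    intro t ht
    have h1 : ‖t • v‖ ≤ ‖t‖ := by
      rw [norm_smul]
      calc ‖t‖ * ‖v‖ ≤ ‖t‖ * 1 := by gcongr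
        _ = ‖t‖ := mul_one _
    rw [mem_ball] at *
    calc dist (z + t • v) c ≤ dist (z + t • v) z + dist z c := dist_triangle _ _ _
      _ < r / 2 + r / 2 := by
          apply add_lt_add _ hz
          have : dist (z + t • v) z = ‖t • v‖ := by simp [dist_eq_norm]
          rw [this]
          exact h1.trans_lt (by simpa [Complex.dist_eq] using ht)
      _ = r := by ring
  have hz' : z ∈ ball c r := ball_subset_ball (by linarith) hz
  set φ : ℂ → ℂ := fun t => g (z + t • v) with hφ
  have hφd : DifferentiableOn ℂ φ (ball (0:ℂ) (r/2)) := by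
    intro t ht
    exact ((hasDerivAt_line (hg _ (hmem t ht))).differentiableAt).differentiableWithinAt
  have hder : deriv φ 0 = fderiv ℂ g z v := by
    have := hasDerivAt_line (v := v) (t := (0:ℂ)) (z := z) (g := g) (by simpa using hg z hz')
    simpa using this.deriv
  have key : ∀ ε > 0, ‖fderiv ℂ g z v‖ ≤ (2 * C + ε) / (r / 2) := by
    intro ε hε
    rw [← hder]
    refine Complex.norm_deriv_le_div_of_mapsTo_ball hφd (MapsTo.mono_right ?_ ball_subset_closedBall) (by linarith)
    intro t ht
    rw [mem_ball]
    calc dist (φ t) (φ 0) ≤ ‖φ t‖ + ‖φ 0‖ := dist_le_norm_add_norm _ _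
      _ ≤ C + C := add_le_add (hC _ (hmem t ht)) (hC _ (by simpa [hφ] using hz'))
      _ < 2 * C + ε := by linarith
  refine le_of_forall_pos_le_add fun δ hδ => ?_
  have := key (δ * r / 2) (by positivity)
  calc ‖fderiv ℂ g z v‖ ≤ (2 * C + δ * r / 2) / (r / 2) := this
    _ = 4 * C / r + δ := by field_simp; ring

lemma cauchy_opnorm (hr : 0 < r) (hg : ∀ x ∈ ball c r, DifferentiableAt ℂ g x)
    (hC : ∀ x ∈ ball c r, ‖g x‖ ≤ C) {z : E} (hz : z ∈ ball c (r / 2)) :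
    ‖fderiv ℂ g z‖ ≤ 4 * C / r := by
  have hC0 : 0 ≤ C := (norm_nonneg _).trans (hC c (mem_ball_self hr))
  refine ContinuousLinearMap.opNorm_le_bound _ (by positivity) fun v => ?_
  rcases eq_or_ne v 0 with rfl | hv0
  · simp
  · have hn : (0:ℝ) < ‖v‖ := norm_pos_iff.2 hv0
    set v' : E := ((‖v‖ : ℂ))⁻¹ • v with hv'
    have hv'1 : ‖v'‖ ≤ 1 := by
      rw [hv', norm_smul]
      simp [hn.ne']
    have hvv : v = ((‖v‖ : ℂ)) • v' := by
      rw [hv', smul_smul]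
      rw [mul_inv_cancel₀ (by exact_mod_cast hn.ne')]
      simp
    calc ‖fderiv ℂ g z v‖ = ‖v‖ * ‖fderiv ℂ g z v'‖ := by
          conv_lhs => rw [hvv]
          rw [map_smul, norm_smul]
          simp
      _ ≤ ‖v‖ * (4 * C / r) := by
          gcongr
          exact cauchy_bound hr hg hC hz hv'1
      _ = 4 * C / r * ‖v‖ := by ring

lemma dq_est (hr : 0 < r) (hg : ∀ x ∈ ball c r, DifferentiableAt ℂ g x)
    (hC : ∀ x ∈ ball c r, ‖g x‖ ≤ C) {v : E} (hv : ‖v‖ ≤ 1) :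
    ∃ K, 0 ≤ K ∧ ∀ z ∈ ball c (r / 2), ∀ s : ℂ, s ∈ ball (0:ℂ) (r / 2) →
      ‖dslope (fun t : ℂ => g (z + t • v)) 0 s - fderiv ℂ g z v‖ ≤ K * ‖s‖ := by
  have hC0 : 0 ≤ C := (norm_nonneg _).trans (hC c (mem_ball_self hr))
  set C₂ : ℝ := (2 * C + 1) / (r / 2) with hC₂
  have hC₂0 : 0 < C₂ := by positivity
  refine ⟨(2 * C₂ + 1) / (r / 2), by positivity, fun z hz s hs => ?_⟩
  have hmem : ∀ t : ℂ, t ∈ ball (0 : ℂ) (r / 2) → z + t • v ∈ ball c r := by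
    intro t ht
    have h1 : ‖t • v‖ ≤ ‖t‖ := by
      rw [norm_smul]
      calc ‖t‖ * ‖v‖ ≤ ‖t‖ * 1 := by gcongr
        _ = ‖t‖ := mul_one _
    rw [mem_ball] at *
    calc dist (z + t • v) c ≤ dist (z + t • v) z + dist z c := dist_triangle _ _ _
      _ < r / 2 + r / 2 := by
          apply add_lt_add _ hz
          have : dist (z + t • v) z = ‖t • v‖ := by simp [dist_eq_norm]
          rw [this]
          exact h1.trans_lt (by simpa [Complex.dist_eq] using ht)
      _ = r := by ring
  set u : ℂ → ℂ := fun t => g (z + t • v) with hu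
  have hz' : z ∈ ball c r := ball_subset_ball (by linarith) hz
  have hud : DifferentiableOn ℂ u (ball (0:ℂ) (r/2)) := fun t ht =>
    ((hasDerivAt_line (hg _ (hmem t ht))).differentiableAt).differentiableWithinAt
  have humaps : MapsTo u (ball (0:ℂ) (r/2)) (ball (u 0) (2 * C + 1)) := by
    intro t ht
    rw [mem_ball]
    calc dist (u t) (u 0) ≤ ‖u t‖ + ‖u 0‖ := dist_le_norm_add_norm _ _
      _ ≤ C + C := add_le_add (hC _ (hmem t ht)) (hC _ (by simpa [hu] using hz'))
      _ < 2 * C + 1 := by linarith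
  set d : ℂ → ℂ := dslope u 0 with hd
  have hdd : DifferentiableOn ℂ d (ball (0:ℂ) (r/2)) :=
    (differentiableOn_dslope (isOpen_ball.mem_nhds (mem_ball_self (by linarith)))).2 hud
  have hd0 : d 0 = fderiv ℂ g z v := by
    rw [hd, dslope_same]
    have := hasDerivAt_line (v := v) (t := (0:ℂ)) (z := z) (g := g) (by simpa using hg z hz')
    simpa using this.deriv
  have hdb : ∀ t ∈ ball (0:ℂ) (r/2), ‖d t‖ ≤ C₂ := fun t ht =>
    norm_dslope_le_div_of_mapsTo_ball hud (humaps.mono_right ball_subset_closedBall) ht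
  have hdmaps : MapsTo d (ball (0:ℂ) (r/2)) (ball (d 0) (2 * C₂ + 1)) := by
    intro t ht
    rw [mem_ball]
    calc dist (d t) (d 0) ≤ ‖d t‖ + ‖d 0‖ := dist_le_norm_add_norm _ _
      _ ≤ C₂ + C₂ := add_le_add (hdb _ ht) (hdb _ (mem_ball_self (by linarith)))
      _ < 2 * C₂ + 1 := by linarith
  have := Complex.dist_le_div_mul_dist_of_mapsTo_ball hdd (hdmaps.mono_right ball_subset_closedBall) hs
  rw [← hd0]
  calc ‖d s - d 0‖ = dist (d s) (d 0) := (dist_eq_norm _ _).symm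
    _ ≤ (2 * C₂ + 1) / (r / 2) * dist s 0 := this
    _ = (2 * C₂ + 1) / (r / 2) * ‖s‖ := by rw [dist_zero_right]

lemma keyL [ProperSpace E] [CompleteSpace E] {f : E → ℂ} {U : Set E} (hU : IsOpen U)
    (hf : ∀ x ∈ U, DifferentiableAt ℂ f x) {v : E} (hv : ‖v‖ ≤ 1)
    {x₀ : E} (hx₀ : x₀ ∈ U) :
    DifferentiableAt ℂ (fun y => fderiv ℂ f y v) x₀ := by
  obtain ⟨ε, hε0, hεU⟩ := Metric.isOpen_iff.1 hU x₀ hx₀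
  set R : ℝ := ε / 2 with hR
  have hR0 : 0 < R := by positivity
  have hcb : closedBall x₀ R ⊆ U := (closedBall_subset_ball (by simp [hR]; linarith)).trans hεU
  have hco : ContinuousOn f (closedBall x₀ R) := fun x hx =>
    ((hf x (hcb hx)).continuousAt).continuousWithinAt
  obtain ⟨C, hC⟩ := (isCompact_closedBall x₀ R).exists_bound_of_continuousOn hco
  have hball : ball x₀ R ⊆ U := fun x hx => hcb (ball_subset_closedBall hx)
  have hgd : ∀ x ∈ ball x₀ R, DifferentiableAt ℂ f x := fun x hx => hf x (hball hx)
  have hCb : ∀ x ∈ ball x₀ R, ‖f x‖ ≤ C := fun x hx => hC x (ball_subset_closedBall hx)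
  obtain ⟨K, hK0, hKest⟩ := dq_est hR0 hgd hCb hv
  -- the sequence of difference quotients
  set σ : ℕ → ℂ := (fun m => ((R / (4 * (m + 1)) : ℝ) : ℂ)) with hσ
  have hσpos : ∀ m : ℕ, 0 < R / (4 * ((m:ℝ) + 1)) := by
    intro m; positivity
  have hσn : ∀ m : ℕ, ‖σ m‖ = R / (4 * (m + 1)) := by
    intro m
    rw [hσ]
    rw [Complex.norm_real, Real.norm_eq_abs, abs_of_pos (hσpos m)]
  have hσ0 : ∀ m, σ m ≠ 0 := fun m =>
    Complex.ofReal_ne_zero.2 (hσpos m).ne'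
  have hσle : ∀ m : ℕ, ‖σ m‖ ≤ R / 4 := by
    intro m
    rw [hσn]
    rw [div_le_div_iff₀ (by positivity) (by positivity)]
    nlinarith [Nat.cast_nonneg (α := ℝ) m, hR0]
  have hσlt : ∀ m : ℕ, σ m ∈ ball (0:ℂ) (R / 2) := by
    intro m
    rw [mem_ball, Complex.dist_eq, sub_zero]
    exact lt_of_le_of_lt (hσle m) (by linarith)
  set q : ℕ → E → ℂ := fun m z => (σ m)⁻¹ * (f (z + σ m • v) - f z) with hq
  -- membership of translates
  have htrans : ∀ m : ℕ, ∀ z ∈ ball x₀ (R / 2), z + σ m • v ∈ ball x₀ R := by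
    intro m z hz
    rw [mem_ball] at *
    calc dist (z + σ m • v) x₀ ≤ dist (z + σ m • v) z + dist z x₀ := dist_triangle _ _ _
      _ < R / 2 + R / 2 := by
          apply add_lt_add _ hz
          have h1 : dist (z + σ m • v) z = ‖σ m • v‖ := by simp [dist_eq_norm]
          rw [h1, norm_smul]
          calc ‖σ m‖ * ‖v‖ ≤ ‖σ m‖ * 1 := by gcongr
            _ = ‖σ m‖ := mul_one _
            _ ≤ R / 4 := hσle m
            _ < R / 2 := by linarith
      _ = R := by ring
  -- differentiability of the quotients
  have hqd : ∀ m : ℕ, ∀ z ∈ ball x₀ (R / 2), DifferentiableAt ℂ (q m) z := by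
    intro m z hz
    have h1 : DifferentiableAt ℂ (fun z => f (z + σ m • v)) z := by
      have := (hf _ (hball (htrans m z hz))).comp z
        ((differentiableAt_id (𝕜 := ℂ) (x := z)).add_const (σ m • v))
      exact this
    have h2 : DifferentiableAt ℂ f z :=
      hf z (hball (ball_subset_ball (by linarith) hz))
    exact (h1.sub h2).const_mul _
  -- bridge to dslope
  have hbridge : ∀ m : ℕ, ∀ z : E, q m z = dslope (fun t : ℂ => f (z + t • v)) 0 (σ m) := by
    intro m z
    rw [dslope_of_ne _ (hσ0 m)]
    rw [slope_def_field]
    simp [hq, zero_smul]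
    ring
  -- uniform estimate for the quotients
  have hqest : ∀ m : ℕ, ∀ z ∈ ball x₀ (R / 2),
      ‖q m z - fderiv ℂ f z v‖ ≤ K * ‖σ m‖ := by
    intro m z hz
    rw [hbridge m z]
    exact hKest z hz (σ m) (hσlt m)
  set Q : ℕ → E → (E →L[ℂ] ℂ) := fun m z => fderiv ℂ (q m) z with hQ
  -- Cauchy estimate for the derivatives of the quotients
  have hQest : ∀ m m' : ℕ, ∀ z ∈ ball x₀ (R / 4),
      ‖Q m z - Q m' z‖ ≤ 8 * (K * (‖σ m‖ + ‖σ m'‖)) / R := by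
    intro m m' z hz
    have hz' : z ∈ ball x₀ (R / 2 / 2) := by
      have : R / 2 / 2 = R / 4 := by ring
      rw [this]; exact hz
    have hsub : ∀ x ∈ ball x₀ (R / 2), DifferentiableAt ℂ (fun y => q m y - q m' y) x :=
      fun x hx => (hqd m x hx).sub (hqd m' x hx)
    have hsubb : ∀ x ∈ ball x₀ (R / 2), ‖q m x - q m' x‖ ≤ K * (‖σ m‖ + ‖σ m'‖) := by
      intro x hx
      calc ‖q m x - q m' x‖
          = ‖(q m x - fderiv ℂ f x v) - (q m' x - fderiv ℂ f x v)‖ := by ring_nf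
        _ ≤ ‖q m x - fderiv ℂ f x v‖ + ‖q m' x - fderiv ℂ f x v‖ := norm_sub_le _ _
        _ ≤ K * ‖σ m‖ + K * ‖σ m'‖ := add_le_add (hqest m x hx) (hqest m' x hx)
        _ = K * (‖σ m‖ + ‖σ m'‖) := by ring
    have := cauchy_opnorm (by positivity : (0:ℝ) < R / 2) hsub hsubb hz'
    have heq : fderiv ℂ (fun y => q m y - q m' y) z = Q m z - Q m' z :=
      fderiv_sub (hqd m z (ball_subset_ball (by linarith) hz))
        (hqd m' z (ball_subset_ball (by linarith) hz))
    rw [heq] at this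
    calc ‖Q m z - Q m' z‖ ≤ 4 * (K * (‖σ m‖ + ‖σ m'‖)) / (R / 2) := this
      _ = 8 * (K * (‖σ m‖ + ‖σ m'‖)) / R := by ring
  -- the numeric bound sequence
  set b : ℕ → ℝ := fun N => 4 * K / (N + 1) with hb
  have hQb : ∀ N m m' : ℕ, N ≤ m → N ≤ m' → ∀ z ∈ ball x₀ (R / 4),
      ‖Q m z - Q m' z‖ ≤ b N := by
    intro N m m' hm hm' z hz
    refine (hQest m m' z hz).trans ?_
    have h1 : ‖σ m‖ ≤ R / (4 * (N + 1)) := by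
      rw [hσn]
      apply div_le_div_of_nonneg_left (le_of_lt hR0) (by positivity)
      have : (N:ℝ) + 1 ≤ (m:ℝ) + 1 := by exact_mod_cast Nat.succ_le_succ hm
      linarith
    have h2 : ‖σ m'‖ ≤ R / (4 * (N + 1)) := by
      rw [hσn]
      apply div_le_div_of_nonneg_left (le_of_lt hR0) (by positivity)
      have : (N:ℝ) + 1 ≤ (m':ℝ) + 1 := by exact_mod_cast Nat.succ_le_succ hm'
      linarith
    have hNpos : ((N:ℝ) + 1) ≠ 0 := by positivity
    have hRne : R ≠ 0 := hR0.ne'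
    rw [hb]
    calc 8 * (K * (‖σ m‖ + ‖σ m'‖)) / R
        ≤ 8 * (K * (R / (4 * (N + 1)) + R / (4 * (N + 1)))) / R := by gcongr
      _ = 4 * K / (N + 1) := by field_simp; ring
  have hb0 : Tendsto b atTop (𝓝 0) := by
    have h := tendsto_one_div_add_atTop_nhds_zero_nat.const_mul (4 * K)
    rw [mul_zero] at h
    refine h.congr fun N => ?_
    rw [hb, mul_one_div]
  -- pointwise limits of the derivative sequence
  have hlimex : ∀ z : E, ∃ L : E →L[ℂ] ℂ,
      z ∈ ball x₀ (R / 4) → Tendsto (fun m => Q m z) atTop (𝓝 L) := by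
    intro z
    by_cases hz : z ∈ ball x₀ (R / 4)
    · have hcs : CauchySeq (fun m => Q m z) := by
        apply cauchySeq_of_le_tendsto_0 b _ hb0
        intro m m' N hm hm'
        rw [dist_eq_norm]
        exact hQb N m m' hm hm' z hz
      obtain ⟨L, hL⟩ := cauchySeq_tendsto_of_complete hcs
      exact ⟨L, fun _ => hL⟩
    · exact ⟨0, fun h => absurd h hz⟩
  choose g' hg' using hlimex
  have hUC : UniformCauchySeqOn Q atTop (ball x₀ (R / 4)) := by
    rw [Metric.uniformCauchySeqOn_iff]
    intro δ hδ
    obtain ⟨N, hN⟩ := (hb0.eventually (gt_mem_nhds hδ)).exists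
    refine ⟨N, fun m hm m' hm' z hz => ?_⟩
    rw [dist_eq_norm]
    exact lt_of_le_of_lt (hQb N m m' hm hm' z hz) hN
  have hTU : TendstoUniformlyOn Q g' atTop (ball x₀ (R / 4)) :=
    hUC.tendstoUniformlyOn_of_tendsto (fun z hz => hg' z hz)
  have hpt : ∀ z ∈ ball x₀ (R / 4),
      Tendsto (fun m => q m z) atTop (𝓝 ((fun y => fderiv ℂ f y v) z)) := by
    intro z hz
    rw [tendsto_iff_norm_sub_tendsto_zero]
    have hbound : Tendsto (fun m : ℕ => K * ‖σ m‖) atTop (𝓝 0) := by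
      have h := tendsto_one_div_add_atTop_nhds_zero_nat.const_mul (K * R / 4)
      rw [mul_zero] at h
      refine h.congr fun m => ?_
      have hm1 : ((m:ℝ) + 1) ≠ 0 := by positivity
      rw [hσn]
      field_simp
    exact squeeze_zero (fun m => norm_nonneg _)
      (fun m => hqest m z (ball_subset_ball (by linarith) hz)) hbound
  have hfd := hasFDerivAt_of_tendstoUniformlyOn isOpen_ball hTU
    (fun m z hz => (hqd m z (ball_subset_ball (by linarith) hz)).hasFDerivAt)
    hpt (mem_ball_self (by positivity))
  exact hfd.differentiableAt

end AuxSchwarz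

open Metric Set Filter Topology

/-- Schwarz-lemma step in the proof of Theorem 2.4. -/
theorem stmt_8 {n : ℕ} (M : ℝ) (hM : 0 < M) (f : (Fin n → ℂ) → ℂ) (hf : memB n M f) :
    ∀ z ∈ polydisk n, ∀ k : Fin n,
      ‖∑ j, z j * pder2 f z j k‖ ≤ M * ‖z‖ := by
  obtain ⟨hdiff, -, -, hbound⟩ := hf
  have hUball : polydisk n = Metric.ball (0 : Fin n → ℂ) 1 := by
    ext x
    simp only [polydisk, Set.mem_setOf_eq, Metric.mem_ball, dist_zero_right]
    constructor
    · intro h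
      rw [pi_norm_lt_iff zero_lt_one]
      intro j; exact h j
    · intro h j
      have := (pi_norm_lt_iff zero_lt_one).1 h j
      exact this
  have hUopen : IsOpen (polydisk n) := hUball ▸ Metric.isOpen_ball
  intro z hz k
  by_cases hz0 : z = 0
  · subst hz0
    simp
  have hr0 : 0 < ‖z‖ := norm_pos_iff.2 hz0
  have hr1 : ‖z‖ < 1 := by rw [hUball] at hz; simpa [dist_zero_right] using hz
  set r : ℝ := ‖z‖ with hrdef
  have hrne : (r : ℂ) ≠ 0 := Complex.ofReal_ne_zero.2 hr0.ne'
  set w : Fin n → ℂ := fun j => z j / (r : ℂ) with hw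
  have hwn : ‖w‖ ≤ 1 := by
    rw [pi_norm_le_iff_of_nonneg zero_le_one]
    intro j
    rw [hw]
    simp only [norm_div, Complex.norm_real, Real.norm_eq_abs, abs_of_pos hr0]
    rw [div_le_one hr0]
    exact norm_le_pi_norm z j
  have hsmul : ∀ t : ℂ, t ∈ Metric.ball (0:ℂ) 1 → t • w ∈ polydisk n := by
    intro t ht
    rw [hUball, Metric.mem_ball, dist_zero_right, norm_smul]
    rw [Metric.mem_ball, dist_zero_right] at ht
    calc ‖t‖ * ‖w‖ ≤ ‖t‖ * 1 := by gcongr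
      _ = ‖t‖ := mul_one _
      _ < 1 := ht
  have hek : ‖(Pi.single k (1:ℂ) : Fin n → ℂ)‖ ≤ 1 := by
    rw [pi_norm_le_iff_of_nonneg zero_le_one]
    intro j
    rcases eq_or_ne j k with rfl | hjk
    · simp
    · simp [Pi.single_apply, hjk]
  have hdiff2 : ∀ x ∈ polydisk n, DifferentiableAt ℂ (fun y => pder f y k) x := by
    intro x hx
    exact keyL hUopen hdiff hek hx
  have hdecomp : w = ∑ j, w j • (Pi.single j (1:ℂ) : Fin n → ℂ) := by
    funext i
    rw [Finset.sum_apply]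
    simp [Pi.single_apply]
  have hψd : ∀ t ∈ Metric.ball (0:ℂ) 1, HasDerivAt (fun s : ℂ => pder f (s • w) k)
      (∑ j, w j * pder2 f (t • w) j k) t := by
    intro t ht
    have h1 := hasDerivAt_line (g := fun y => pder f y k) (z := 0) (v := w) (t := t)
      (by simpa using hdiff2 _ (hsmul t ht))
    simp only [zero_add] at h1
    have h2 : ∀ p : Fin n → ℂ, fderiv ℂ (fun y => pder f y k) p w
        = ∑ j, w j * pder2 f p j k := by
      intro p
      conv_lhs => rw [hdecomp]
      rw [map_sum]
      refine Finset.sum_congr rfl fun j _ => ?_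
      rw [map_smul, smul_eq_mul]
      rfl
    rw [h2 (t • w)] at h1
    exact h1
  set ψ : ℂ → ℂ := fun s => pder f (s • w) k with hψ
  have hψdiff : DifferentiableOn ℂ ψ (Metric.ball (0:ℂ) 1) := fun t ht =>
    ((hψd t ht).differentiableAt).differentiableWithinAt
  have hderiv_eq : ∀ t ∈ Metric.ball (0:ℂ) 1, deriv ψ t = ∑ j, w j * pder2 f (t • w) j k :=
    fun t ht => (hψd t ht).deriv
  set G : ℂ → ℂ := fun t => t * deriv ψ t with hG
  have hGdiff : DifferentiableOn ℂ G (Metric.ball (0:ℂ) 1) :=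
    differentiableOn_id.mul ((hψdiff.analyticOnNhd Metric.isOpen_ball).deriv.differentiableOn)
  have hG0 : G 0 = 0 := zero_mul _
  have hGval : ∀ t ∈ Metric.ball (0:ℂ) 1, G t = ∑ j, (t * w j) * pder2 f (t • w) j k := by
    intro t ht
    rw [hG]
    simp only []
    rw [hderiv_eq t ht, Finset.mul_sum]
    exact Finset.sum_congr rfl fun j _ => by ring
  have hGbd : ∀ t ∈ Metric.ball (0:ℂ) 1, ‖G t‖ ≤ M := by
    intro t ht
    rw [hGval t ht]
    have hmem := hsmul t ht
    calc ‖∑ j, (t * w j) * pder2 f (t • w) j k‖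
        ≤ ∑ j, ‖(t * w j) * pder2 f (t • w) j k‖ := norm_sum_le _ _
      _ ≤ ∑ l, ∑ j, ∑ k', ‖(t • w) l * pder2 f (t • w) j k'‖ := by
          apply Finset.sum_le_sum
          intro l _
          have e1 : ‖(t * w l) * pder2 f (t • w) l k‖
              = ‖(t • w) l * pder2 f (t • w) l k‖ := by
            rfl
          rw [e1]
          calc ‖(t • w) l * pder2 f (t • w) l k‖
              ≤ ∑ k', ‖(t • w) l * pder2 f (t • w) l k'‖ :=
                Finset.single_le_sum
                  (f := fun k' => ‖(t • w) l * pder2 f (t • w) l k'‖)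
                  (fun k' _ => norm_nonneg _) (Finset.mem_univ k)
            _ ≤ ∑ j, ∑ k', ‖(t • w) l * pder2 f (t • w) j k'‖ :=
                Finset.single_le_sum
                  (f := fun j => ∑ k', ‖(t • w) l * pder2 f (t • w) j k'‖)
                  (fun j _ => Finset.sum_nonneg fun k' _ => norm_nonneg _)
                  (Finset.mem_univ l)
      _ ≤ M := hbound _ hmem
  have hrmem : (r : ℂ) ∈ Metric.ball (0:ℂ) 1 := by
    rw [Metric.mem_ball, dist_zero_right, Complex.norm_real, Real.norm_eq_abs, abs_of_pos hr0]
    exact hr1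
  have hrw : ∀ j, (r : ℂ) * w j = z j := by
    intro j
    rw [hw]
    field_simp
  have hrsmul : (r : ℂ) • w = z := by
    funext j
    exact hrw j
  have key : ∀ δ > 0, ‖∑ j, z j * pder2 f z j k‖ ≤ (M + δ) * r := by
    intro δ hδ
    have hmaps : MapsTo G (Metric.ball (0:ℂ) 1) (Metric.ball (G 0) (M + δ)) := by
      intro t ht
      rw [Metric.mem_ball, hG0, dist_zero_right]
      exact lt_of_le_of_lt (hGbd t ht) (by linarith)
    have hS := Complex.dist_le_div_mul_dist_of_mapsTo_ball hGdiff (hmaps.mono_right ball_subset_closedBall) hrmem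
    rw [hG0, dist_zero_right, dist_zero_right, div_one] at hS
    have hGr : G (r : ℂ) = ∑ j, z j * pder2 f z j k := by
      rw [hGval _ hrmem, hrsmul]
      exact Finset.sum_congr rfl fun j _ => by rw [hrw j]
    rw [hGr] at hS
    calc ‖∑ j, z j * pder2 f z j k‖
        = ‖∑ j, z j * pder2 f z j k‖ := rfl
      _ ≤ (M + δ) * ‖(r : ℂ)‖ := hS
      _ = (M + δ) * r := by
          rw [Complex.norm_real, Real.norm_eq_abs, abs_of_pos hr0]
  have hfin : ‖∑ j, z j * pder2 f z j k‖ / r ≤ M := by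
    refine le_of_forall_pos_le_add fun δ hδ => ?_
    rw [div_le_iff₀ hr0]
    exact key δ hδ
  calc ‖∑ j, z j * pder2 f z j k‖
      = ‖∑ j, z j * pder2 f z j k‖ / r * r := by field_simp
    _ ≤ M * r := by
        apply mul_le_mul_of_nonneg_right hfin (le_of_lt hr0)
end

section
/- Let M > 0, let h and g be holomorphic on 𝔻ⁿ with h(0) = g(0) = 0, ∂h/∂z_j(0) = 1 and ∂g/∂z_j(0) = 0 for all j = 1,…,n, and with Taylor expansions h(z) = Σ_{j=1}^n z_j + Σ_{|α|≥2} a_α z^α and g(z) = Σ_{|α|≥2} b_α z^α converging on 𝔻ⁿ. If Σ_{m=2}^∞ Σ_{α : |α| = m} n·m·(m−1)·(|a_α| + |b_α|) ≤ M, then f = h + conj∘g belongs to 𝓑_{H_n^0}(M). (Theorem 2.6.) -/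
open Complex Finset

/-! ### Auxiliary definitions and lemmas -/

noncomputable def mon {n : ℕ} (α : Fin n → ℕ) (z : Fin n → ℂ) : ℂ := ∏ j, z j ^ α j

noncomputable def dec {n : ℕ} (α : Fin n → ℕ) (k : Fin n) : Fin n → ℕ :=
  Function.update α k (α k - 1)

noncomputable def monD {n : ℕ} (α : Fin n → ℕ) (z : Fin n → ℂ) : (Fin n → ℂ) →L[ℂ] ℂ :=
  ∑ k, ((α k : ℂ) * mon (dec α k) z) • ContinuousLinearMap.proj k

noncomputable def linC (n : ℕ) : (Fin n → ℂ) →L[ℂ] ℂ := ∑ j, ContinuousLinearMap.proj j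

lemma linC_apply {n : ℕ} (x : Fin n → ℂ) : linC n x = ∑ j, x j := by
  simp [linC]

lemma mon_abs_le {n : ℕ} (α : Fin n → ℕ) {z : Fin n → ℂ} (hz : ∀ j, ‖z j‖ ≤ 1) :
    ‖mon α z‖ ≤ 1 := by
  rw [mon, norm_prod]
  apply Finset.prod_le_one
  · intro j _; positivity
  · intro j _
    rw [norm_pow]
    exact pow_le_one₀ (by positivity) (hz j)

lemma hasFDerivAt_mon {n : ℕ} (α : Fin n → ℕ) (z : Fin n → ℂ) :
    HasFDerivAt (mon α) (monD α z) z := by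
  classical
  have h : ∀ k ∈ Finset.univ, HasFDerivAt (fun z : Fin n → ℂ => z k ^ α k)
      (((α k : ℂ) * z k ^ (α k - 1)) • (ContinuousLinearMap.proj k : (Fin n → ℂ) →L[ℂ] ℂ)) z := by
    intro k _
    have hp : HasFDerivAt (fun z : Fin n → ℂ => z k)
        (ContinuousLinearMap.proj k : (Fin n → ℂ) →L[ℂ] ℂ) z :=
      (ContinuousLinearMap.proj k : (Fin n → ℂ) →L[ℂ] ℂ).hasFDerivAt
    exact (hasDerivAt_pow (α k) (z k)).comp_hasFDerivAt z hp
  have key := HasFDerivAt.finset_prod h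
  have h2 : monD α z = ∑ k, (∏ j ∈ Finset.univ.erase k, z j ^ α j) •
      (((α k : ℂ) * z k ^ (α k - 1)) • (ContinuousLinearMap.proj k : (Fin n → ℂ) →L[ℂ] ℂ)) := by
    rw [monD]
    refine Finset.sum_congr rfl fun k _ => ?_
    rw [smul_smul]
    congr 1
    have : mon (dec α k) z = z k ^ (α k - 1) * ∏ j ∈ Finset.univ.erase k, z j ^ α j := by
      rw [mon, ← Finset.mul_prod_erase Finset.univ _ (Finset.mem_univ k)]
      congr 1
      · simp [dec]
      · exact Finset.prod_congr rfl fun j hj => by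
          simp [dec, Function.update_of_ne (Finset.ne_of_mem_erase hj)]
    rw [this]; ring
  rw [h2]
  exact key

lemma monD_apply_single {n : ℕ} (α : Fin n → ℕ) (z : Fin n → ℂ) (k : Fin n) :
    monD α z (Pi.single k 1) = (α k : ℂ) * mon (dec α k) z := by
  classical
  rw [monD, ContinuousLinearMap.sum_apply]
  rw [Finset.sum_eq_single k]
  · simp
  · intro i _ hik
    simp [Pi.single_apply, (Ne.symm hik : ¬ k = i)]
  · simp

lemma norm_proj_le {n : ℕ} (k : Fin n) :
    ‖(ContinuousLinearMap.proj k : (Fin n → ℂ) →L[ℂ] ℂ)‖ ≤ 1 := by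
  apply ContinuousLinearMap.opNorm_le_bound _ zero_le_one
  intro v
  simpa using norm_le_pi_norm v k

lemma monD_norm_le {n : ℕ} (α : Fin n → ℕ) {z : Fin n → ℂ} (hz : ∀ j, ‖z j‖ ≤ 1) :
    ‖monD α z‖ ≤ ((∑ j, α j : ℕ) : ℝ) := by
  rw [monD]
  refine le_trans (norm_sum_le _ _) ?_
  rw [Nat.cast_sum]
  refine Finset.sum_le_sum fun k _ => ?_
  refine le_trans (ContinuousLinearMap.opNorm_smul_le _ _) ?_
  calc ‖(α k : ℂ) * mon (dec α k) z‖ * ‖(ContinuousLinearMap.proj k : (Fin n → ℂ) →L[ℂ] ℂ)‖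
      ≤ ((α k : ℝ) * 1) * 1 := by
        apply mul_le_mul _ (norm_proj_le k) (norm_nonneg _) (by positivity)
        rw [norm_mul]
        apply mul_le_mul _ _ (norm_nonneg _) (by positivity)
        · simp
        · exact mon_abs_le _ hz
    _ = (α k : ℝ) := by ring

lemma isOpen_polydisk (n : ℕ) : IsOpen (polydisk n) := by
  have : polydisk n = ⋂ j, (fun z : Fin n → ℂ => z j) ⁻¹' (Metric.ball 0 1) := by
    ext z
    simp [polydisk, Metric.mem_ball, Complex.dist_eq]
  rw [this]
  exact isOpen_iInter_of_finite fun j =>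
    (Metric.isOpen_ball).preimage (continuous_apply j)

lemma convex_polydisk (n : ℕ) : Convex ℝ (polydisk n) := by
  intro x hx y hy p q hp hq hpq j
  have h1 := hx j
  have h2 := hy j
  have t1 : ‖(p • x + q • y) j‖ ≤ p * ‖x j‖ + q * ‖y j‖ := by
    refine le_trans (norm_add_le _ _) ?_
    simp only [Pi.smul_apply, Complex.real_smul, norm_mul, Complex.norm_real, Real.norm_eq_abs]
    rw [_root_.abs_of_nonneg hp, _root_.abs_of_nonneg hq]
  have hx0 := norm_nonneg (x j)
  have hy0 := norm_nonneg (y j)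
  refine lt_of_le_of_lt t1 ?_
  rcases eq_or_lt_of_le hp with hp' | hp'
  · have : q = 1 := by linarith
    subst this
    rw [← hp']
    have := mul_lt_mul_of_pos_left h2 one_pos
    linarith
  · have e1 := mul_lt_mul_of_pos_left h1 hp'
    have e2 := mul_le_mul_of_nonneg_left h2.le hq
    linarith

lemma preconnected_polydisk (n : ℕ) : IsPreconnected (polydisk n) :=
  (convex_polydisk n).isPreconnected

lemma zero_mem_polydisk (n : ℕ) : (0 : Fin n → ℂ) ∈ polydisk n := by
  intro j; simp

lemma sum_dec {n : ℕ} (α : Fin n → ℕ) (k : Fin n) (h : 1 ≤ α k) :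
    ∑ j, dec α k j = (∑ j, α j) - 1 := by
  classical
  have e1 : ∑ j, dec α k j = (α k - 1) + ∑ j ∈ Finset.univ.erase k, α j := by
    rw [dec, ← Finset.add_sum_erase _ _ (Finset.mem_univ k)]
    congr 1
    · simp
    · exact Finset.sum_congr rfl fun j hj => by
        simp [Function.update_of_ne (Finset.ne_of_mem_erase hj)]
  have e2 : ∑ j, α j = α k + ∑ j ∈ Finset.univ.erase k, α j :=
    (Finset.add_sum_erase _ _ (Finset.mem_univ k)).symm
  omega

lemma le_sum_fin {n : ℕ} (α : Fin n → ℕ) (k : Fin n) : α k ≤ ∑ j, α j :=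
  Finset.single_le_sum (fun j _ => Nat.zero_le _) (Finset.mem_univ k)

lemma dec_mul_bound {n : ℕ} (α : Fin n → ℕ) (k : Fin n) :
    α k * (∑ j, dec α k j) ≤ (∑ j, α j) * ((∑ j, α j) - 1) := by
  rcases Nat.eq_zero_or_pos (α k) with h | h
  · simp [h]
  · rw [sum_dec α k h]
    exact Nat.mul_le_mul_right _ (le_sum_fin α k)

lemma sum_sum_dec {n : ℕ} (α : Fin n → ℕ) :
    ∑ k, α k * (∑ j, dec α k j) = (∑ j, α j) * ((∑ j, α j) - 1) := by
  have h : ∀ k : Fin n, α k * (∑ j, dec α k j) = α k * ((∑ j, α j) - 1) := by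
    intro k
    rcases Nat.eq_zero_or_pos (α k) with h | h
    · simp [h]
    · rw [sum_dec α k h]
  rw [Finset.sum_congr rfl fun k _ => h k, ← Finset.sum_mul]

section KeyDeriv
variable {n : ℕ} {I : Type} (c : I → ℂ) (e : I → Fin n → ℕ) (w : I → ℝ)

lemma deriv_norm_bound (hb : ∀ i, ‖c i‖ * ((∑ j, e i j : ℕ) : ℝ) ≤ w i)
    {z : Fin n → ℂ} (hz : z ∈ polydisk n) (i : I) :
    ‖c i • monD (e i) z‖ ≤ w i := by
  refine le_trans (ContinuousLinearMap.opNorm_smul_le _ _) (le_trans ?_ (hb i))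
  exact mul_le_mul_of_nonneg_left (monD_norm_le _ (fun j => (hz j).le)) (norm_nonneg _)

lemma summable_monD (hw : Summable w)
    (hb : ∀ i, ‖c i‖ * ((∑ j, e i j : ℕ) : ℝ) ≤ w i)
    {z : Fin n → ℂ} (hz : z ∈ polydisk n) :
    Summable fun i => c i • monD (e i) z :=
  Summable.of_norm_bounded hw (deriv_norm_bound c e w hb hz)

lemma key_deriv (hw : Summable w)
    (hb : ∀ i, ‖c i‖ * ((∑ j, e i j : ℕ) : ℝ) ≤ w i)
    (h0 : Summable fun i => c i * mon (e i) (0 : Fin n → ℂ))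
    {z : Fin n → ℂ} (hz : z ∈ polydisk n) :
    HasFDerivAt (fun y => ∑' i, c i * mon (e i) y) (∑' i, c i • monD (e i) z) z := by
  refine hasFDerivAt_tsum_of_isPreconnected hw (isOpen_polydisk n) (preconnected_polydisk n)
    (fun i x hx => ?_) (fun i x hx => deriv_norm_bound c e w hb hx i)
    (zero_mem_polydisk n) h0 hz
  exact (hasFDerivAt_mon (e i) x).const_mul (c i)

lemma pder_tsum (hw : Summable w)
    (hb : ∀ i, ‖c i‖ * ((∑ j, e i j : ℕ) : ℝ) ≤ w i)
    (h0 : Summable fun i => c i * mon (e i) (0 : Fin n → ℂ))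
    {z : Fin n → ℂ} (hz : z ∈ polydisk n) (k : Fin n) :
    pder (fun y => ∑' i, c i * mon (e i) y) z k
      = ∑' i, (c i * (e i k : ℂ)) * mon (dec (e i) k) z := by
  rw [pder, (key_deriv c e w hw hb h0 hz).fderiv]
  have hs : HasSum (fun i => c i • monD (e i) z) (∑' i, c i • monD (e i) z) :=
    (summable_monD c e w hw hb hz).hasSum
  have h2 := (ContinuousLinearMap.apply ℂ ℂ (Pi.single k 1)).hasSum hs
  have h3 : (∑' (i : I), c i • monD (e i) z) (Pi.single k 1)
      = ∑' i, (c i • monD (e i) z) (Pi.single k 1) := h2.tsum_eq.symm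
  rw [h3]
  refine tsum_congr fun i => ?_
  simp [monD_apply_single]
  ring
end KeyDeriv

section Main
variable {n : ℕ} (c : (Fin n → ℕ) → ℂ) (w : (Fin n → ℕ) → ℝ)

lemma wnn (hb : ∀ α, ‖c α‖ *
      (((∑ j, α j) * ((∑ j, α j) - 1) : ℕ) : ℝ) ≤ w α) (α : Fin n → ℕ) : 0 ≤ w α :=
  le_trans (by positivity) (hb α)

lemma hb1 (hc : ∀ α, (∑ j, α j) < 2 → c α = 0)
    (hb : ∀ α, ‖c α‖ * (((∑ j, α j) * ((∑ j, α j) - 1) : ℕ) : ℝ) ≤ w α)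
    (α : Fin n → ℕ) : ‖c α‖ * ((∑ j, α j : ℕ) : ℝ) ≤ w α := by
  rcases eq_or_ne (c α) 0 with h | h
  · simpa [h] using wnn c w hb α
  · have hm : 2 ≤ ∑ j, α j := by
      by_contra hm
      exact h (hc α (by omega))
    refine le_trans ?_ (hb α)
    have : (∑ j, α j) ≤ (∑ j, α j) * ((∑ j, α j) - 1) := Nat.le_mul_of_pos_right _ (by omega)
    exact mul_le_mul_of_nonneg_left (Nat.cast_le.2 this) (norm_nonneg _)

lemma hbk (hb : ∀ α, ‖c α‖ * (((∑ j, α j) * ((∑ j, α j) - 1) : ℕ) : ℝ) ≤ w α)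
    (k : Fin n) (α : Fin n → ℕ) :
    ‖c α * (α k : ℂ)‖ * ((∑ j, dec α k j : ℕ) : ℝ) ≤ w α := by
  refine le_trans ?_ (hb α)
  rw [norm_mul]
  have h : ‖(α k : ℂ)‖ = ((α k : ℕ) : ℝ) := by
    rw [Complex.norm_natCast]
  rw [h, mul_assoc, ← Nat.cast_mul]
  exact mul_le_mul_of_nonneg_left (Nat.cast_le.2 (dec_mul_bound α k)) (norm_nonneg _)

lemma h0k (hw : Summable w) (hc : ∀ α, (∑ j, α j) < 2 → c α = 0)
    (hb : ∀ α, ‖c α‖ * (((∑ j, α j) * ((∑ j, α j) - 1) : ℕ) : ℝ) ≤ w α)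
    (k : Fin n) :
    Summable fun α => (c α * (α k : ℂ)) * mon (dec α k) (0 : Fin n → ℂ) := by
  refine Summable.of_norm_bounded hw fun α => ?_
  rcases eq_or_ne (c α) 0 with h | h
  · simpa [h] using wnn c w hb α
  · have hm : 2 ≤ ∑ j, α j := by
      by_contra hm
      exact h (hc α (by omega))
    have b1 : ‖(c α * (α k : ℂ)) * mon (dec α k) (0 : Fin n → ℂ)‖
        ≤ ‖c α‖ * ((α k : ℕ) : ℝ) := by
      rw [norm_mul, norm_mul, Complex.norm_natCast, mul_assoc]
      refine mul_le_mul_of_nonneg_left ?_ (norm_nonneg _)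
      calc ((α k : ℕ) : ℝ) * ‖mon (dec α k) (0 : Fin n → ℂ)‖
          ≤ (α k : ℝ) * 1 := mul_le_mul_of_nonneg_left
            (mon_abs_le _ (fun j => by simp)) (by positivity)
        _ = (α k : ℝ) := by ring
    refine le_trans b1 (le_trans ?_ (hb α))
    refine mul_le_mul_of_nonneg_left (Nat.cast_le.2 ?_) (norm_nonneg _)
    calc α k ≤ ∑ j, α j := le_sum_fin α k
      _ ≤ (∑ j, α j) * ((∑ j, α j) - 1) := Nat.le_mul_of_pos_right _ (by omega)

lemma pder2_tsum_bound (hw : Summable w)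
    (hc : ∀ α, (∑ j, α j) < 2 → c α = 0)
    (hb : ∀ α, ‖c α‖ * (((∑ j, α j) * ((∑ j, α j) - 1) : ℕ) : ℝ) ≤ w α)
    (h0 : Summable fun α => c α * mon α (0 : Fin n → ℂ))
    {z : Fin n → ℂ} (hz : z ∈ polydisk n) (j k : Fin n) :
    ‖pder2 (fun y => ∑' α, c α * mon α y) z j k‖
      ≤ ∑' α, ‖c α‖ * (((α k) * (dec α k j) : ℕ) : ℝ) := by
  have hb1' := hb1 c w hc hb
  have hbk' := hbk c w hb k
  have h0k' := h0k c w hw hc hb k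
  have heq : (fun y => pder (fun y' => ∑' α, c α * mon α y') y k)
      =ᶠ[nhds z] (fun y => ∑' α, (c α * (α k : ℂ)) * mon (dec α k) y) := by
    refine Filter.eventuallyEq_of_mem ((isOpen_polydisk n).mem_nhds hz) fun y hy => ?_
    exact pder_tsum c (fun α => α) w hw hb1' h0 hy k
  rw [pder2, heq.fderiv_eq]
  have h2 : pder (fun y => ∑' α, (c α * (α k : ℂ)) * mon (dec α k) y) z j
      = ∑' α, ((c α * (α k : ℂ)) * ((dec α k j : ℕ) : ℂ)) * mon (dec (dec α k) j) z :=
    pder_tsum (fun α => c α * (α k : ℂ)) (fun α => dec α k) w hw hbk' h0k' hz j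
  rw [← pder, h2]
  have hBnn : ∀ α : Fin n → ℕ, (0:ℝ) ≤ ‖c α‖ * (((α k) * (dec α k j) : ℕ) : ℝ) :=
    fun α => by positivity
  have hBle : ∀ α : Fin n → ℕ, ‖c α‖ * (((α k) * (dec α k j) : ℕ) : ℝ) ≤ w α := by
    intro α
    refine le_trans ?_ (hb α)
    refine mul_le_mul_of_nonneg_left (Nat.cast_le.2 ?_) (norm_nonneg _)
    calc α k * dec α k j ≤ α k * ∑ i, dec α k i :=
          Nat.mul_le_mul_left _ (le_sum_fin _ j)
      _ ≤ (∑ i, α i) * ((∑ i, α i) - 1) := dec_mul_bound α k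
  have hBsum : Summable fun α : Fin n → ℕ =>
      ‖c α‖ * (((α k) * (dec α k j) : ℕ) : ℝ) :=
    Summable.of_nonneg_of_le hBnn hBle hw
  have hnorm : ∀ α : Fin n → ℕ,
      ‖((c α * (α k : ℂ)) * ((dec α k j : ℕ) : ℂ)) * mon (dec (dec α k) j) z‖
        ≤ ‖c α‖ * (((α k) * (dec α k j) : ℕ) : ℝ) := by
    intro α
    rw [norm_mul, norm_mul, norm_mul, Complex.norm_natCast,
      Complex.norm_natCast]
    push_cast
    calc ‖c α‖ * (α k : ℝ) * (dec α k j : ℝ) * ‖mon (dec (dec α k) j) z‖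
        ≤ ‖c α‖ * (α k : ℝ) * (dec α k j : ℝ) * 1 :=
          mul_le_mul_of_nonneg_left (mon_abs_le _ (fun i => (hz i).le)) (by positivity)
      _ = ‖c α‖ * ((α k : ℝ) * (dec α k j : ℝ)) := by ring
  have hsum2 : Summable fun α : Fin n → ℕ =>
      ‖((c α * (α k : ℂ)) * ((dec α k j : ℕ) : ℂ)) * mon (dec (dec α k) j) z‖ :=
    Summable.of_nonneg_of_le (fun α => norm_nonneg _) hnorm hBsum
  exact le_trans (norm_tsum_le_tsum_norm hsum2) (Summable.tsum_le_tsum hnorm hsum2 hBsum)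
end Main

/-- Theorem 2.6: sufficient coefficient condition for membership in
`𝓑_{H_n^0}(M)`. -/
theorem stmt_14 {n : ℕ} (M : ℝ) (hM : 0 < M) (h g : (Fin n → ℂ) → ℂ)
    (a b : (Fin n → ℕ) → ℂ)
    (hh : ∀ z ∈ polydisk n, DifferentiableAt ℂ h z)
    (hg : ∀ z ∈ polydisk n, DifferentiableAt ℂ g z)
    (hh0 : h 0 = 0) (hg0 : g 0 = 0)
    (hh1 : ∀ j : Fin n, pder h 0 j = 1) (hg1 : ∀ j : Fin n, pder g 0 j = 0)
    (ha0 : ∀ α : Fin n → ℕ, ∑ j, α j < 2 → a α = 0)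
    (hb0 : ∀ α : Fin n → ℕ, ∑ j, α j < 2 → b α = 0)
    (hexph : ∀ z ∈ polydisk n,
      HasSum (fun α : Fin n → ℕ => a α * ∏ j, z j ^ α j) (h z - ∑ j, z j))
    (hexpg : ∀ z ∈ polydisk n,
      HasSum (fun α : Fin n → ℕ => b α * ∏ j, z j ^ α j) (g z))
    (S : ℝ)
    (hS : HasSum (fun α : Fin n → ℕ =>
      (n : ℝ) * (((∑ j, α j) * ((∑ j, α j) - 1) : ℕ) : ℝ) *
        (‖a α‖ + ‖b α‖)) S)
    (hSM : S ≤ M) :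
    memBH n M h g := by
  refine ⟨hh, hg, hh0, hg0, hh1, hg1, ?_⟩
  intro z hz
  -- notation
  set wf : (Fin n → ℕ) → ℝ := fun α =>
    (n : ℝ) * (((∑ j, α j) * ((∑ j, α j) - 1) : ℕ) : ℝ) *
      (‖a α‖ + ‖b α‖) with hwf
  have hw : Summable wf := hS.summable
  have hnpos : ∀ α : Fin n → ℕ, 2 ≤ ∑ j, α j → (1:ℝ) ≤ (n:ℝ) := by
    intro α hα
    have : n ≠ 0 := by
      rintro rfl
      have : (∑ j, α j) = 0 := by simp
      omega
    exact_mod_cast Nat.one_le_iff_ne_zero.2 this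
  have hba : ∀ α, ‖a α‖ *
      (((∑ j, α j) * ((∑ j, α j) - 1) : ℕ) : ℝ) ≤ wf α := by
    intro α
    rcases eq_or_ne (a α) 0 with hA | hA
    · simp only [hA, norm_zero, zero_mul, hwf]
      positivity
    · have hm : 2 ≤ ∑ j, α j := by
        by_contra hm
        exact hA (ha0 α (by omega))
      have h1 := hnpos α hm
      have hC : (0:ℝ) ≤ (((∑ j, α j) * ((∑ j, α j) - 1) : ℕ) : ℝ) := by positivity
      have ha' := norm_nonneg (a α)
      have hb' := norm_nonneg (b α)
      simp only [hwf]
      nlinarith [mul_nonneg hC hb', mul_nonneg (mul_nonneg hC ha') (sub_nonneg.2 h1),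
        mul_nonneg (mul_nonneg hC hb') (sub_nonneg.2 h1)]
  have hbb : ∀ α, ‖b α‖ *
      (((∑ j, α j) * ((∑ j, α j) - 1) : ℕ) : ℝ) ≤ wf α := by
    intro α
    rcases eq_or_ne (b α) 0 with hA | hA
    · simp only [hA, norm_zero, zero_mul, hwf]
      positivity
    · have hm : 2 ≤ ∑ j, α j := by
        by_contra hm
        exact hA (hb0 α (by omega))
      have h1 := hnpos α hm
      have hC : (0:ℝ) ≤ (((∑ j, α j) * ((∑ j, α j) - 1) : ℕ) : ℝ) := by positivity
      have ha' := norm_nonneg (a α)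
      have hb' := norm_nonneg (b α)
      simp only [hwf]
      nlinarith [mul_nonneg hC ha', mul_nonneg (mul_nonneg hC hb') (sub_nonneg.2 h1),
        mul_nonneg (mul_nonneg hC ha') (sub_nonneg.2 h1)]
  -- rewrite hba/hbb to have abs on the left of the cast
  have hba' : ∀ α, ‖a α‖ *
      (((∑ j, α j) * ((∑ j, α j) - 1) : ℕ) : ℝ) ≤ wf α := hba
  -- summability at 0
  have h0a : Summable fun α => a α * mon α (0 : Fin n → ℂ) :=
    (hexph 0 (zero_mem_polydisk n)).summable
  have h0b : Summable fun α => b α * mon α (0 : Fin n → ℂ) :=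
    (hexpg 0 (zero_mem_polydisk n)).summable
  have hb1a := hb1 a wf ha0 hba
  have hb1b := hb1 b wf hb0 hbb
  -- identification of second derivatives
  have pderh : ∀ k : Fin n, ∀ y ∈ polydisk n,
      pder h y k = 1 + pder (fun y' => ∑' α, a α * mon α y') y k := by
    intro k y hy
    have hFA := key_deriv a (fun α => α) wf hw hb1a h0a hy
    have hlin : HasFDerivAt (fun x : Fin n → ℂ => ∑ j, x j) (linC n) y := by
      have h1 := (linC n).hasFDerivAt (x := y)
      have e : ⇑(linC n) = fun x : Fin n → ℂ => ∑ j, x j := funext fun x => linC_apply x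
      rwa [e] at h1
    have hadd := hlin.add hFA
    have heqf : h =ᶠ[nhds y] fun x => (∑ j, x j) + ∑' α, a α * mon α x := by
      refine Filter.eventuallyEq_of_mem ((isOpen_polydisk n).mem_nhds hy) fun x hx => ?_
      have e2 : (∑' α, a α * mon α x) = h x - ∑ j, x j := (hexph x hx).tsum_eq
      rw [e2]; ring
    have hh' := hadd.congr_of_eventuallyEq heqf
    rw [pder, hh'.fderiv, ContinuousLinearMap.add_apply, pder, hFA.fderiv]
    congr 1
    rw [linC_apply]
    simp
  have pderg : ∀ k : Fin n, ∀ y ∈ polydisk n,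
      pder g y k = pder (fun y' => ∑' α, b α * mon α y') y k := by
    intro k y hy
    have heqf : g =ᶠ[nhds y] fun x => ∑' α, b α * mon α x := by
      refine Filter.eventuallyEq_of_mem ((isOpen_polydisk n).mem_nhds hy) fun x hx => ?_
      exact ((hexpg x hx).tsum_eq).symm
    rw [pder, pder, heqf.fderiv_eq]
  have pd2h : ∀ j k : Fin n, pder2 h z j k
      = pder2 (fun y => ∑' α, a α * mon α y) z j k := by
    intro j k
    have e2 : (fun y => pder h y k)
        =ᶠ[nhds z] fun y => 1 + pder (fun y' => ∑' α, a α * mon α y') y k :=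
      Filter.eventuallyEq_of_mem ((isOpen_polydisk n).mem_nhds hz) fun y hy => pderh k y hy
    rw [pder2, pder2, e2.fderiv_eq, fderiv_const_add]
  have pd2g : ∀ j k : Fin n, pder2 g z j k
      = pder2 (fun y => ∑' α, b α * mon α y) z j k := by
    intro j k
    have e2 : (fun y => pder g y k)
        =ᶠ[nhds z] fun y => pder (fun y' => ∑' α, b α * mon α y') y k :=
      Filter.eventuallyEq_of_mem ((isOpen_polydisk n).mem_nhds hz) fun y hy => pderg k y hy
    rw [pder2, pder2, e2.fderiv_eq]
  -- the termwise bounds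
  have bndA := fun (j k : Fin n) => pder2_tsum_bound a wf hw ha0 hba h0a hz j k
  have bndB := fun (j k : Fin n) => pder2_tsum_bound b wf hw hb0 hbb h0b hz j k
  -- summability of the coefficient series
  have sAjk : ∀ j k : Fin n, Summable fun α : Fin n → ℕ =>
      ‖a α‖ * (((α k) * (dec α k j) : ℕ) : ℝ) := by
    intro j k
    refine Summable.of_nonneg_of_le (fun α => by positivity) (fun α => ?_) hw
    refine le_trans ?_ (hba α)
    refine mul_le_mul_of_nonneg_left (Nat.cast_le.2 ?_) (norm_nonneg _)
    calc α k * dec α k j ≤ α k * ∑ i, dec α k i :=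
          Nat.mul_le_mul_left _ (le_sum_fin _ j)
      _ ≤ (∑ i, α i) * ((∑ i, α i) - 1) := dec_mul_bound α k
  have sBjk : ∀ j k : Fin n, Summable fun α : Fin n → ℕ =>
      ‖b α‖ * (((α k) * (dec α k j) : ℕ) : ℝ) := by
    intro j k
    refine Summable.of_nonneg_of_le (fun α => by positivity) (fun α => ?_) hw
    refine le_trans ?_ (hbb α)
    refine mul_le_mul_of_nonneg_left (Nat.cast_le.2 ?_) (norm_nonneg _)
    calc α k * dec α k j ≤ α k * ∑ i, dec α k i :=
          Nat.mul_le_mul_left _ (le_sum_fin _ j)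
      _ ≤ (∑ i, α i) * ((∑ i, α i) - 1) := dec_mul_bound α k
  -- collapse the double sum of tsum's
  have tripA : ∑ j : Fin n, ∑ k : Fin n,
      (∑' α : Fin n → ℕ, ‖a α‖ * (((α k) * (dec α k j) : ℕ) : ℝ))
      = ∑' α : Fin n → ℕ, ‖a α‖ *
          (((∑ i, α i) * ((∑ i, α i) - 1) : ℕ) : ℝ) := by
    have e1 : ∀ j : Fin n, ∑ k : Fin n,
        (∑' α : Fin n → ℕ, ‖a α‖ * (((α k) * (dec α k j) : ℕ) : ℝ))
        = ∑' α : Fin n → ℕ, ∑ k : Fin n,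
            ‖a α‖ * (((α k) * (dec α k j) : ℕ) : ℝ) := by
      intro j
      exact (Summable.tsum_finsetSum (fun k _ => sAjk j k)).symm
    rw [Finset.sum_congr rfl fun j _ => e1 j]
    rw [← Summable.tsum_finsetSum (fun j _ => summable_sum fun k _ => sAjk j k)]
    refine tsum_congr fun α => ?_
    have hnat : ∑ j : Fin n, ∑ k : Fin n, (α k * dec α k j)
        = (∑ i, α i) * ((∑ i, α i) - 1) := by
      rw [Finset.sum_comm]
      simp_rw [← Finset.mul_sum]
      exact sum_sum_dec α
    have : (∑ j : Fin n, ∑ k : Fin n, (((α k) * (dec α k j) : ℕ) : ℝ))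
        = (((∑ i, α i) * ((∑ i, α i) - 1) : ℕ) : ℝ) := by
      rw [← hnat]; push_cast; ring
    simp_rw [← Finset.mul_sum]
    rw [this]
  have tripB : ∑ j : Fin n, ∑ k : Fin n,
      (∑' α : Fin n → ℕ, ‖b α‖ * (((α k) * (dec α k j) : ℕ) : ℝ))
      = ∑' α : Fin n → ℕ, ‖b α‖ *
          (((∑ i, α i) * ((∑ i, α i) - 1) : ℕ) : ℝ) := by
    have e1 : ∀ j : Fin n, ∑ k : Fin n,
        (∑' α : Fin n → ℕ, ‖b α‖ * (((α k) * (dec α k j) : ℕ) : ℝ))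
        = ∑' α : Fin n → ℕ, ∑ k : Fin n,
            ‖b α‖ * (((α k) * (dec α k j) : ℕ) : ℝ) := by
      intro j
      exact (Summable.tsum_finsetSum (fun k _ => sBjk j k)).symm
    rw [Finset.sum_congr rfl fun j _ => e1 j]
    rw [← Summable.tsum_finsetSum (fun j _ => summable_sum fun k _ => sBjk j k)]
    refine tsum_congr fun α => ?_
    have hnat : ∑ j : Fin n, ∑ k : Fin n, (α k * dec α k j)
        = (∑ i, α i) * ((∑ i, α i) - 1) := by
      rw [Finset.sum_comm]
      simp_rw [← Finset.mul_sum]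
      exact sum_sum_dec α
    have : (∑ j : Fin n, ∑ k : Fin n, (((α k) * (dec α k j) : ℕ) : ℝ))
        = (((∑ i, α i) * ((∑ i, α i) - 1) : ℕ) : ℝ) := by
      rw [← hnat]; push_cast; ring
    simp_rw [← Finset.mul_sum]
    rw [this]
  -- the two coefficient tails
  have sA : Summable fun α : Fin n → ℕ => ‖a α‖ *
      (((∑ i, α i) * ((∑ i, α i) - 1) : ℕ) : ℝ) :=
    Summable.of_nonneg_of_le (fun α => by positivity) hba hw
  have sB : Summable fun α : Fin n → ℕ => ‖b α‖ *
      (((∑ i, α i) * ((∑ i, α i) - 1) : ℕ) : ℝ) :=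
    Summable.of_nonneg_of_le (fun α => by positivity) hbb hw
  set tA := ∑' α : Fin n → ℕ, ‖a α‖ *
      (((∑ i, α i) * ((∑ i, α i) - 1) : ℕ) : ℝ) with htA
  set tB := ∑' α : Fin n → ℕ, ‖b α‖ *
      (((∑ i, α i) * ((∑ i, α i) - 1) : ℕ) : ℝ) with htB
  -- S equals n * (tA + tB)
  have hS' : S = (n : ℝ) * tA + (n : ℝ) * tB := by
    rw [← hS.tsum_eq]
    have : ∀ α : Fin n → ℕ, wf α =
        (n : ℝ) * (‖a α‖ * (((∑ i, α i) * ((∑ i, α i) - 1) : ℕ) : ℝ))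
        + (n : ℝ) * (‖b α‖ * (((∑ i, α i) * ((∑ i, α i) - 1) : ℕ) : ℝ)) := by
      intro α; simp only [hwf]; ring
    calc (∑' α : Fin n → ℕ, wf α) = ∑' α : Fin n → ℕ,
          ((n : ℝ) * (‖a α‖ * (((∑ i, α i) * ((∑ i, α i) - 1) : ℕ) : ℝ))
          + (n : ℝ) * (‖b α‖ * (((∑ i, α i) * ((∑ i, α i) - 1) : ℕ) : ℝ))) :=
        tsum_congr this
      _ = (n : ℝ) * tA + (n : ℝ) * tB := by
        rw [Summable.tsum_add (sA.mul_left _) (sB.mul_left _), tsum_mul_left, tsum_mul_left]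
  -- main estimate
  have main : ∑ l, ∑ j, ∑ k,
      (‖z l * pder2 h z j k‖ + ‖z l * pder2 g z j k‖)
      ≤ (n : ℝ) * (tA + tB) := by
    have hterm : ∀ l j k : Fin n,
        ‖z l * pder2 h z j k‖ + ‖z l * pder2 g z j k‖
        ≤ (∑' α : Fin n → ℕ, ‖a α‖ * (((α k) * (dec α k j) : ℕ) : ℝ))
          + (∑' α : Fin n → ℕ, ‖b α‖ * (((α k) * (dec α k j) : ℕ) : ℝ)) := by
      intro l j k
      have e1 : ‖z l * pder2 h z j k‖ ≤
          ∑' α : Fin n → ℕ, ‖a α‖ * (((α k) * (dec α k j) : ℕ) : ℝ) := by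
        rw [norm_mul, pd2h j k]
        calc ‖z l‖ * ‖pder2 (fun y => ∑' α, a α * mon α y) z j k‖
            ≤ 1 * (∑' α : Fin n → ℕ, ‖a α‖ * (((α k) * (dec α k j) : ℕ) : ℝ)) :=
              mul_le_mul (hz l).le (bndA j k) (norm_nonneg _) zero_le_one
          _ = _ := one_mul _
      have e2 : ‖z l * pder2 g z j k‖ ≤
          ∑' α : Fin n → ℕ, ‖b α‖ * (((α k) * (dec α k j) : ℕ) : ℝ) := by
        rw [norm_mul, pd2g j k]
        calc ‖z l‖ * ‖pder2 (fun y => ∑' α, b α * mon α y) z j k‖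
            ≤ 1 * (∑' α : Fin n → ℕ, ‖b α‖ * (((α k) * (dec α k j) : ℕ) : ℝ)) :=
              mul_le_mul (hz l).le (bndB j k) (norm_nonneg _) zero_le_one
          _ = _ := one_mul _
      exact add_le_add e1 e2
    calc ∑ l, ∑ j, ∑ k,
        (‖z l * pder2 h z j k‖ + ‖z l * pder2 g z j k‖)
        ≤ ∑ _l : Fin n, ∑ j, ∑ k,
          ((∑' α : Fin n → ℕ, ‖a α‖ * (((α k) * (dec α k j) : ℕ) : ℝ))
          + (∑' α : Fin n → ℕ, ‖b α‖ * (((α k) * (dec α k j) : ℕ) : ℝ))) := by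
          refine Finset.sum_le_sum fun l _ => Finset.sum_le_sum fun j _ =>
            Finset.sum_le_sum fun k _ => hterm l j k
      _ = ∑ _l : Fin n, (tA + tB) := by
          refine Finset.sum_congr rfl fun l _ => ?_
          rw [← tripA, ← tripB, ← Finset.sum_add_distrib]
          refine Finset.sum_congr rfl fun j _ => ?_
          rw [← Finset.sum_add_distrib]
      _ = (n : ℝ) * (tA + tB) := by
          rw [Finset.sum_const, Finset.card_univ, Fintype.card_fin, nsmul_eq_mul]
  refine le_trans main (le_trans ?_ hSM)
  rw [hS']
  ring_nf
  exact le_refl _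
end
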